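/- Let L be one of the logics tΣ_n[m] or tΠ_n[m] over a finite relational vocabulary τ, for m, n ≥ 0, and let ⊛ be a quantifier-free sum-like binary operation on τ-structures. If A₁, A₁', A₂, A₂' are τ-structures such that A₁ and A₁' satisfy the same L sentences and A₂ and A₂' satisfy the same L sentences, then A₁ ⊛ A₂ and A₁' ⊛ A₂' satisfy the same L sentences. In particular, the L theory of A₁ ⊛ A₂ is determined by the L theories of A₁ and A₂. -/

import Mathlib

namespace FV

open Cardinal

/-- A (finite) relational vocabulary: a type of relation symbols with arities. -/
structure Vocab : Type 1 where
  Rel : Type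
  arity : Rel → ℕ

/-- A structure over a relational vocabulary. -/
structure Struc (τ : Vocab) : Type 1 where
  carrier : Type
  rel : ∀ R : τ.Rel, (Fin (τ.arity R) → carrier) → Prop

/-- Infinitary formulae in negation normal form over a relational vocabulary,
with free variables among `Fin n`. -/
inductive Formula (τ : Vocab) : ℕ → Type 1 where
  | tru {n : ℕ} : Formula τ n
  | fls {n : ℕ} : Formula τ n
  | rel {n : ℕ} (R : τ.Rel) (ts : Fin (τ.arity R) → Fin n) : Formula τ n
  | nrel {n : ℕ} (R : τ.Rel) (ts : Fin (τ.arity R) → Fin n) : Formula τ n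
  | eq {n : ℕ} (i j : Fin n) : Formula τ n
  | neq {n : ℕ} (i j : Fin n) : Formula τ n
  | iAnd {n : ℕ} (I : Type) (f : I → Formula τ n) : Formula τ n
  | iOr {n : ℕ} (I : Type) (f : I → Formula τ n) : Formula τ n
  | ex {n : ℕ} (φ : Formula τ (n+1)) : Formula τ n
  | all {n : ℕ} (φ : Formula τ (n+1)) : Formula τ n

/-- Binary conjunction (a conjunction of arity 2). -/
def Formula.and {τ : Vocab} {n : ℕ} (φ ψ : Formula τ n) : Formula τ n :=
  Formula.iAnd Bool (fun b => if b then φ else ψ)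

/-- Binary disjunction (a disjunction of arity 2). -/
def Formula.or {τ : Vocab} {n : ℕ} (φ ψ : Formula τ n) : Formula τ n :=
  Formula.iOr Bool (fun b => if b then φ else ψ)

/-- Quantifier-free formulae (in NNF, with finite conjunctions/disjunctions). -/
inductive IsQF {τ : Vocab} : ∀ {n : ℕ}, Formula τ n → Prop where
  | tru {n : ℕ} : IsQF (Formula.tru (τ := τ) (n := n))
  | fls {n : ℕ} : IsQF (Formula.fls (τ := τ) (n := n))
  | rel {n : ℕ} (R : τ.Rel) (ts : Fin (τ.arity R) → Fin n) : IsQF (Formula.rel R ts)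
  | nrel {n : ℕ} (R : τ.Rel) (ts : Fin (τ.arity R) → Fin n) : IsQF (Formula.nrel R ts)
  | eq {n : ℕ} (i j : Fin n) : IsQF (Formula.eq (τ := τ) i j)
  | neq {n : ℕ} (i j : Fin n) : IsQF (Formula.neq (τ := τ) i j)
  | iAnd {n : ℕ} (I : Type) (hI : Finite I) (f : I → Formula τ n)
      (h : ∀ i, IsQF (f i)) : IsQF (Formula.iAnd I f)
  | iOr {n : ℕ} (I : Type) (hI : Finite I) (f : I → Formula τ n)
      (h : ∀ i, IsQF (f i)) : IsQF (Formula.iOr I f)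

/-- Satisfaction of a formula in a structure under an assignment. -/
def Sat {τ : Vocab} (A : Struc τ) : ∀ {n : ℕ}, Formula τ n → (Fin n → A.carrier) → Prop
  | _, .tru, _ => True
  | _, .fls, _ => False
  | _, .rel R ts, v => A.rel R (fun i => v (ts i))
  | _, .nrel R ts, v => ¬ A.rel R (fun i => v (ts i))
  | _, .eq i j, v => v i = v j
  | _, .neq i j, v => v i ≠ v j
  | _, .iAnd I f, v => ∀ i : I, Sat A (f i) v
  | _, .iOr I f, v => ∃ i : I, Sat A (f i) v
  | _, .ex φ, v => ∃ a, Sat A φ (Fin.snoc v a)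
  | _, .all φ, v => ∀ a, Sat A φ (Fin.snoc v a)

/-- The empty assignment. -/
def emptyA {α : Type} : Fin 0 → α := fun i => i.elim0

/-- The (quantifier) rank of a formula: the supremum of the number of quantifiers
on any root-to-leaf path of its parse tree. -/
noncomputable def rank {τ : Vocab} : ∀ {n : ℕ}, Formula τ n → Cardinal
  | _, .iAnd I f => ⨆ i : I, rank (f i)
  | _, .iOr I f => ⨆ i : I, rank (f i)
  | _, .ex φ => rank φ + 1
  | _, .all φ => rank φ + 1
  | _, _ => 0

/-- The size of a formula (number of nodes of its parse tree), as a cardinal. -/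
noncomputable def sizeC {τ : Vocab} : ∀ {n : ℕ}, Formula τ n → Cardinal
  | _, .iAnd I f => 1 + Cardinal.sum (fun i : I => sizeC (f i))
  | _, .iOr I f => 1 + Cardinal.sum (fun i : I => sizeC (f i))
  | _, .ex φ => 1 + sizeC φ
  | _, .all φ => 1 + sizeC φ
  | _, _ => 1

mutual
/-- The class tΣ_{κ,λ} of formulae. -/
inductive TSigma (τ : Vocab) (κ : Cardinal) : Ordinal → ∀ {n : ℕ}, Formula τ n → Prop where
  | qf {n : ℕ} {φ : Formula τ n} : IsQF φ → TSigma τ κ 0 φ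
  | conj {n : ℕ} {lam : Ordinal} (I : Type) (f : I → Formula τ n)
      (hI : Cardinal.mk I < κ) (lam' : I → Ordinal) (hlt : ∀ i, lam' i < lam)
      (h : ∀ i, TPi τ κ (lam' i) (f i)) : TSigma τ κ lam (Formula.iAnd I f)
  | ex {n : ℕ} {lam : Ordinal} {φ : Formula τ (n+1)} :
      TSigma τ κ lam φ → TSigma τ κ lam (Formula.ex φ)

/-- The class tΠ_{κ,λ} of formulae. -/
inductive TPi (τ : Vocab) (κ : Cardinal) : Ordinal → ∀ {n : ℕ}, Formula τ n → Prop where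
  | qf {n : ℕ} {φ : Formula τ n} : IsQF φ → TPi τ κ 0 φ
  | disj {n : ℕ} {lam : Ordinal} (I : Type) (f : I → Formula τ n)
      (hI : Cardinal.mk I < κ) (lam' : I → Ordinal) (hlt : ∀ i, lam' i < lam)
      (h : ∀ i, TSigma τ κ (lam' i) (f i)) : TPi τ κ lam (Formula.iOr I f)
  | all {n : ℕ} {lam : Ordinal} {φ : Formula τ (n+1)} :
      TPi τ κ lam φ → TPi τ κ lam (Formula.all φ)
end

/-- tΣ_{∞,λ}: union of tΣ_{κ,λ} over all infinite cardinals κ. -/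
def TSigmaInf (τ : Vocab) (lam : Ordinal) {n : ℕ} (φ : Formula τ n) : Prop :=
  ∃ κ : Cardinal, ℵ₀ ≤ κ ∧ TSigma τ κ lam φ

/-- tΠ_{∞,λ}: union of tΠ_{κ,λ} over all infinite cardinals κ. -/
def TPiInf (τ : Vocab) (lam : Ordinal) {n : ℕ} (φ : Formula τ n) : Prop :=
  ∃ κ : Cardinal, ℵ₀ ≤ κ ∧ TPi τ κ lam φ

/-- The λ-fold exponential `tower` function (taking suprema at limits). -/
noncomputable def towerC (κ : Cardinal) (l : Ordinal) : Cardinal :=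
  Ordinal.limitRecOn l κ (fun _ ih => (2 : Cardinal) ^ ih)
    (fun o _ ih => ⨆ i : {o' : Ordinal // o' < o}, ih i.1 i.2)

/-- The n-fold exponential `tower` function on naturals. -/
def towerN : ℕ → Cardinal → Cardinal
  | 0, k => k
  | n+1, k => (2 : Cardinal) ^ towerN n k

open Classical in
/-- ρ(κ,λ) = tower(λ,κ) if κ > ω, else ω. -/
noncomputable def rho (κ : Cardinal) (lam : Ordinal) : Cardinal :=
  if ℵ₀ < κ then towerC κ lam else ℵ₀

/-- ∞-propositional formulae over a set `V` of propositional variables. -/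
inductive PropForm (V : Type) : Type 1 where
  | var (v : V) : PropForm V
  | not (p : PropForm V) : PropForm V
  | iAnd (I : Type) (f : I → PropForm V) : PropForm V
  | iOr (I : Type) (f : I → PropForm V) : PropForm V

/-- Binary conjunction of propositional formulae. -/
def PropForm.and {V : Type} (p q : PropForm V) : PropForm V :=
  PropForm.iAnd Bool (fun b => if b then p else q)

/-- Binary disjunction of propositional formulae. -/
def PropForm.or {V : Type} (p q : PropForm V) : PropForm V :=
  PropForm.iOr Bool (fun b => if b then p else q)

/-- Evaluation of an ∞-propositional formula under an assignment. -/
def PropForm.eval {V : Type} (ζ : V → Bool) : PropForm V → Prop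
  | .var v => ζ v = true
  | .not p => ¬ PropForm.eval ζ p
  | .iAnd _ f => ∀ i, PropForm.eval ζ (f i)
  | .iOr _ f => ∃ i, PropForm.eval ζ (f i)

/-- Negation-free ∞-propositional formulae. -/
inductive PropForm.NegFree {V : Type} : PropForm V → Prop where
  | var (v : V) : PropForm.NegFree (.var v)
  | iAnd (I : Type) (f : I → PropForm V) (h : ∀ i, PropForm.NegFree (f i)) :
      PropForm.NegFree (.iAnd I f)
  | iOr (I : Type) (f : I → PropForm V) (h : ∀ i, PropForm.NegFree (f i)) :
      PropForm.NegFree (.iOr I f)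

/-- Finitary (ordinary) propositional formulae. -/
inductive PropForm.Finitary {V : Type} : PropForm V → Prop where
  | var (v : V) : PropForm.Finitary (.var v)
  | not (p : PropForm V) (h : PropForm.Finitary p) : PropForm.Finitary (.not p)
  | iAnd (I : Type) (hI : Finite I) (f : I → PropForm V)
      (h : ∀ i, PropForm.Finitary (f i)) : PropForm.Finitary (.iAnd I f)
  | iOr (I : Type) (hI : Finite I) (f : I → PropForm V)
      (h : ∀ i, PropForm.Finitary (f i)) : PropForm.Finitary (.iOr I f)

/-- Size of an ∞-propositional formula. -/
noncomputable def PropForm.size {V : Type} : PropForm V → Cardinal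
  | .var _ => 1
  | .not p => 1 + PropForm.size p
  | .iAnd I f => 1 + Cardinal.sum (fun i : I => PropForm.size (f i))
  | .iOr I f => 1 + Cardinal.sum (fun i : I => PropForm.size (f i))

/-- A reduction sequence `D(x̄₁, x̄₂) = (Δ₁(x̄₁), Δ₂(x̄₂), β)` over τ. -/
structure RedSeq (τ : Vocab) (r₁ r₂ : ℕ) : Type 1 where
  I : Type
  Δ₁ : I → Formula τ r₁
  Δ₂ : I → Formula τ r₂
  β : PropForm (I × Fin 2)

/-- `(A₁, A₂, ā₁, ā₂)` is a model of the reduction sequence `D`. -/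
def RedSeq.Models {τ : Vocab} {r₁ r₂ : ℕ} (D : RedSeq τ r₁ r₂) (A₁ A₂ : Struc τ)
    (a₁ : Fin r₁ → A₁.carrier) (a₂ : Fin r₂ → A₂.carrier) : Prop :=
  ∃ ζ : D.I × Fin 2 → Bool, D.β.eval ζ ∧
    (∀ i : D.I, (ζ (i, 0) = true ↔ Sat A₁ (D.Δ₁ i) a₁)) ∧
    (∀ i : D.I, (ζ (i, 1) = true ↔ Sat A₂ (D.Δ₂ i) a₂))

/-- Size of a reduction sequence. -/
noncomputable def RedSeq.size {τ : Vocab} {r₁ r₂ : ℕ} (D : RedSeq τ r₁ r₂) : Cardinal :=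
  Cardinal.sum (fun i : D.I => sizeC (D.Δ₁ i)) +
    Cardinal.sum (fun i : D.I => sizeC (D.Δ₂ i)) + D.β.size

/-- The vocabulary τ̱ = τ ∪ {P} for a new unary predicate P (represented by `none`). -/
def annotV (τ : Vocab) : Vocab where
  Rel := Option τ.Rel
  arity := fun R => match R with
    | none => 1
    | some S => τ.arity S

/-- The annotated disjoint union of two τ-structures: their disjoint union,
expanded by interpreting the new unary predicate P as the universe of the first. -/
def adu {τ : Vocab} (A₁ A₂ : Struc τ) : Struc (annotV τ) where
  carrier := A₁.carrier ⊕ A₂.carrier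
  rel := fun R => match R with
    | none => fun v => (v ⟨0, Nat.one_pos⟩).isLeft = true
    | some S => fun v =>
        (∃ w : Fin (τ.arity S) → A₁.carrier, A₁.rel S w ∧ v = fun i => Sum.inl (w i)) ∨
        (∃ w : Fin (τ.arity S) → A₂.carrier, A₂.rel S w ∧ v = fun i => Sum.inr (w i))

/-- `D` is a Feferman–Vaught decomposition of `φ(x̄₁,x̄₂)` over annotated disjoint union. -/
def FVDecompADU {τ : Vocab} {r₁ r₂ : ℕ} (φ : Formula (annotV τ) (r₁ + r₂))
    (D : RedSeq τ r₁ r₂) : Prop :=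
  ∀ (A₁ A₂ : Struc τ) (a₁ : Fin r₁ → A₁.carrier) (a₂ : Fin r₂ → A₂.carrier),
    Sat (adu A₁ A₂) φ (Fin.append (fun i => Sum.inl (a₁ i)) (fun i => Sum.inr (a₂ i)))
      ↔ D.Models A₁ A₂ a₁ a₂

/-- `D` is a Feferman–Vaught decomposition of the sentence `φ` over the binary operation `op`. -/
def FVDecompOp {τ : Vocab} (op : Struc τ → Struc τ → Struc τ) (φ : Formula τ 0)
    (D : RedSeq τ 0 0) : Prop :=
  ∀ A₁ A₂ : Struc τ, Sat (op A₁ A₂) φ emptyA ↔ D.Models A₁ A₂ emptyA emptyA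

/-- A quantifier-free scalar (σ,τ)-interpretation. -/
structure QFInterp (σ τ : Vocab) : Type 1 where
  xiU : Formula σ 1
  xiR : ∀ R : τ.Rel, Formula σ (τ.arity R)
  hU : IsQF xiU
  hR : ∀ R : τ.Rel, IsQF (xiR R)

/-- The τ-structure interpreted in a σ-structure by a quantifier-free interpretation. -/
def QFInterp.app {σ τ : Vocab} (Ξ : QFInterp σ τ) (A : Struc σ) : Struc τ where
  carrier := { a : A.carrier // Sat A Ξ.xiU (fun _ => a) }
  rel := fun R v => Sat A (Ξ.xiR R) (fun i => (v i).1)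

/-- The quantifier-free sum-like binary operation defined by a (τ̱,τ)-interpretation. -/
def sumLike {τ : Vocab} (Ξ : QFInterp (annotV τ) τ) (A₁ A₂ : Struc τ) : Struc τ :=
  Ξ.app (adu A₁ A₂)


/-- Relabelling of free variables. -/
def relabel {τ : Vocab} : ∀ {m n : ℕ}, (Fin m → Fin n) → Formula τ m → Formula τ n
  | _, _, _, .tru => .tru
  | _, _, _, .fls => .fls
  | _, _, g, .rel R ts => .rel R (fun i => g (ts i))
  | _, _, g, .nrel R ts => .nrel R (fun i => g (ts i))
  | _, _, g, .eq i j => .eq (g i) (g j)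
  | _, _, g, .neq i j => .neq (g i) (g j)
  | _, _, g, .iAnd I f => .iAnd I (fun i => relabel g (f i))
  | _, _, g, .iOr I f => .iOr I (fun i => relabel g (f i))
  | _, _, g, .ex φ => .ex (relabel (Fin.snoc (fun i => Fin.castSucc (g i)) (Fin.last _)) φ)
  | _, _, g, .all φ => .all (relabel (Fin.snoc (fun i => Fin.castSucc (g i)) (Fin.last _)) φ)

/-- Negation, in negation normal form. -/
def nnfNeg {τ : Vocab} : ∀ {n : ℕ}, Formula τ n → Formula τ n
  | _, .tru => .fls
  | _, .fls => .tru
  | _, .rel R ts => .nrel R ts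
  | _, .nrel R ts => .rel R ts
  | _, .eq i j => .neq i j
  | _, .neq i j => .eq i j
  | _, .iAnd I f => .iOr I (fun i => nnfNeg (f i))
  | _, .iOr I f => .iAnd I (fun i => nnfNeg (f i))
  | _, .ex φ => .all (nnfNeg φ)
  | _, .all φ => .ex (nnfNeg φ)

/-- Finite conjunction of a tuple of formulae. -/
def finAnd {τ : Vocab} {n : ℕ} : ∀ {r : ℕ}, (Fin r → Formula τ n) → Formula τ n
  | 0, _ => .tru
  | r+1, f => (finAnd (fun i => f (Fin.castSucc i))).and (f (Fin.last r))

/-- A block of `k` existential quantifiers. -/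
def exBlock {τ : Vocab} : ∀ (k : ℕ) {r : ℕ}, Formula τ (r + k) → Formula τ r
  | 0, _, φ => φ
  | k+1, _, φ => exBlock k (Formula.ex φ)

/-- A block of `k` universal quantifiers. -/
def allBlock {τ : Vocab} : ∀ (k : ℕ) {r : ℕ}, Formula τ (r + k) → Formula τ r
  | 0, _, φ => φ
  | k+1, _, φ => allBlock k (Formula.all φ)

mutual
/-- The class tΣ_{(n,k)}: tΣ_n formulae all of whose quantifier blocks have length exactly k. -/
inductive SigNK (τ : Vocab) (k : ℕ) : ℕ → ∀ {r : ℕ}, Formula τ r → Prop where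
  | qf {r : ℕ} {φ : Formula τ r} : IsQF φ → SigNK τ k 0 φ
  | blk {r n : ℕ} (hn : 0 < n) (I : Type) (hI : Finite I) (f : I → Formula τ (r + k))
      (n' : I → ℕ) (hlt : ∀ i, n' i < n) (h : ∀ i, PiNK τ k (n' i) (f i)) :
      SigNK τ k n (exBlock k (Formula.iAnd I f))
/-- The class tΠ_{(n,k)}: tΠ_n formulae all of whose quantifier blocks have length exactly k. -/
inductive PiNK (τ : Vocab) (k : ℕ) : ℕ → ∀ {r : ℕ}, Formula τ r → Prop where
  | qf {r : ℕ} {φ : Formula τ r} : IsQF φ → PiNK τ k 0 φ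
  | blk {r n : ℕ} (hn : 0 < n) (I : Type) (hI : Finite I) (f : I → Formula τ (r + k))
      (n' : I → ℕ) (hlt : ∀ i, n' i < n) (h : ∀ i, SigNK τ k (n' i) (f i)) :
      PiNK τ k n (allBlock k (Formula.iOr I f))
end

/-- Partial isomorphism condition on a pair of tuples. -/
def PIso {τ : Vocab} (A₁ A₂ : Struc τ) (r : ℕ)
    (a₁ : Fin r → A₁.carrier) (a₂ : Fin r → A₂.carrier) : Prop :=
  (∀ i j : Fin r, a₁ i = a₁ j ↔ a₂ i = a₂ j) ∧
  (∀ (R : τ.Rel) (ts : Fin (τ.arity R) → Fin r),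
      A₁.rel R (fun l => a₁ (ts l)) ↔ A₂.rel R (fun l => a₂ (ts l)))

/-- The Duplicator has a winning strategy in the (n,k)-prefix game on the ordered pair
((A₁,ā₁),(A₂,ā₂)): in odd rounds the Spoiler picks a k-tuple in A₁ (and the Duplicator
answers in A₂), in even rounds the roles of the structures are swapped; the Duplicator wins
a play if the chosen tuples collectively form a partial isomorphism. -/
def DWinPrefix {τ : Vocab} (k : ℕ) : ℕ → (A₁ A₂ : Struc τ) → (r : ℕ) →
    (Fin r → A₁.carrier) → (Fin r → A₂.carrier) → Prop
  | 0, A₁, A₂, r, a₁, a₂ => PIso A₁ A₂ r a₁ a₂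
  | n+1, A₁, A₂, r, a₁, a₂ =>
      ∀ b₁ : Fin k → A₁.carrier, ∃ b₂ : Fin k → A₂.carrier,
        DWinPrefix k n A₂ A₁ (r + k) (Fin.append a₂ b₂) (Fin.append a₁ b₁)

/-- The Duplicator has a winning strategy in the (n,k)-tree-prefix game on the set
{(A₁,ā₁),(A₂,ā₂)}: in the first round the Spoiler picks a k-tuple in either structure, and
thereafter in the structure in which the Duplicator chose in the previous round. -/
def DWinTree {τ : Vocab} (k : ℕ) : ℕ → (A₁ A₂ : Struc τ) → (r : ℕ) →
    (Fin r → A₁.carrier) → (Fin r → A₂.carrier) → Prop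
  | 0, A₁, A₂, r, a₁, a₂ => PIso A₁ A₂ r a₁ a₂
  | n+1, A₁, A₂, r, a₁, a₂ =>
      (∀ b₁ : Fin k → A₁.carrier, ∃ b₂ : Fin k → A₂.carrier,
        DWinPrefix k n A₂ A₁ (r + k) (Fin.append a₂ b₂) (Fin.append a₁ b₁)) ∧
      (∀ b₂ : Fin k → A₂.carrier, ∃ b₁ : Fin k → A₁.carrier,
        DWinPrefix k n A₁ A₂ (r + k) (Fin.append a₁ b₁) (Fin.append a₂ b₂))

/-- (A₁,ā₁) ⇛_{(n,k)} (A₂,ā₂) : every tΣ_{(n,k)} formula true of (A₁,ā₁) is true of (A₂,ā₂). -/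
def TransferNK {τ : Vocab} (n k : ℕ) (A₁ A₂ : Struc τ) (r : ℕ)
    (a₁ : Fin r → A₁.carrier) (a₂ : Fin r → A₂.carrier) : Prop :=
  ∀ φ : Formula τ r, SigNK τ k n φ → Sat A₁ φ a₁ → Sat A₂ φ a₂

/-- (A₁,ā₁) ≡_{(n,k)} (A₂,ā₂) : agreement on all tΣ_{(n,k)} formulae. -/
def EquivNK {τ : Vocab} (n k : ℕ) (A₁ A₂ : Struc τ) (r : ℕ)
    (a₁ : Fin r → A₁.carrier) (a₂ : Fin r → A₂.carrier) : Prop :=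
  ∀ φ : Formula τ r, SigNK τ k n φ → (Sat A₁ φ a₁ ↔ Sat A₂ φ a₂)

namespace QFInterp

variable {σ τ : Vocab}

/-- The universe formula ξ_U applied at variable `i`. -/
def uAt (Ξ : QFInterp σ τ) {n : ℕ} (i : Fin n) : Formula σ n :=
  relabel (fun _ : Fin 1 => i) Ξ.xiU

/-- The universe formula ξ_U applied at the last (just-quantified) variable. -/
def uLast (Ξ : QFInterp σ τ) {n : ℕ} : Formula σ (n+1) :=
  Ξ.uAt (Fin.last n)

/-- Close a pending quantifier-block guard. -/
def closeG {n : ℕ} : Option (Bool × Formula σ n) → Formula σ n → Formula σ n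
  | none, r => r
  | some (true, g), r => g.and r
  | some (false, g), r => g.or r

/-- Block-wise translation Ξ(φ) of a formula under a quantifier-free interpretation,
with an accumulator carrying the pending universe-guard of the current quantifier block:
Ξ(R(z̄)) = ξ_R(z̄) ∧ ⋀ᵢ ξ_U(zᵢ); Ξ(¬R(z̄)) = ¬ξ_R(z̄) ∧ ⋀ᵢ ξ_U(zᵢ) (¬ξ_R in NNF);
Ξ commutes with conjunctions and disjunctions; Ξ(∃x̄ ⋀ᵢφᵢ) = ∃x̄(⋀ⱼ ξ_U(xⱼ) ∧ ⋀ᵢΞ(φᵢ));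
Ξ(∀x̄ ⋁ᵢφᵢ) = ∀x̄((⋁ⱼ ¬ξ_U(xⱼ)) ∨ ⋁ᵢΞ(φᵢ)) (¬ξ_U in NNF). -/
def trA (Ξ : QFInterp σ τ) : ∀ {n : ℕ}, Option (Bool × Formula σ n) → Formula τ n → Formula σ n
  | _, mode, .tru => closeG mode .tru
  | _, mode, .fls => closeG mode .fls
  | _, mode, .rel R ts =>
      closeG mode ((relabel ts (Ξ.xiR R)).and (finAnd (fun i => Ξ.uAt (ts i))))
  | _, mode, .nrel R ts =>
      closeG mode ((nnfNeg (relabel ts (Ξ.xiR R))).and (finAnd (fun i => Ξ.uAt (ts i))))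
  | _, mode, .eq i j => closeG mode ((Formula.eq i j).and ((Ξ.uAt i).and (Ξ.uAt j)))
  | _, mode, .neq i j => closeG mode ((Formula.neq i j).and ((Ξ.uAt i).and (Ξ.uAt j)))
  | _, some (true, g), .iAnd I f =>
      .iAnd (Option I) (fun o => o.elim g (fun i => Ξ.trA none (f i)))
  | _, some (false, g), .iOr I f =>
      .iOr (Option I) (fun o => o.elim g (fun i => Ξ.trA none (f i)))
  | _, mode, .iAnd I f => closeG mode (.iAnd I (fun i => Ξ.trA none (f i)))
  | _, mode, .iOr I f => closeG mode (.iOr I (fun i => Ξ.trA none (f i)))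
  | _, some (true, g), .ex φ =>
      .ex (Ξ.trA (some (true, (relabel Fin.castSucc g).and Ξ.uLast)) φ)
  | _, some (false, g), .all φ =>
      .all (Ξ.trA (some (false, (relabel Fin.castSucc g).or (nnfNeg Ξ.uLast))) φ)
  | _, mode, .ex φ => closeG mode (.ex (Ξ.trA (some (true, Ξ.uLast)) φ))
  | _, mode, .all φ => closeG mode (.all (Ξ.trA (some (false, nnfNeg Ξ.uLast)) φ))

/-- The translation Ξ(φ) of a formula. -/
def translate (Ξ : QFInterp σ τ) {n : ℕ} (φ : Formula τ n) : Formula σ n :=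
  Ξ.trA none φ

/-- The size |Ξ| of an interpretation: the sum of the sizes of its formulae. -/
noncomputable def size [Fintype τ.Rel] (Ξ : QFInterp σ τ) : Cardinal :=
  sizeC Ξ.xiU + ∑ R : τ.Rel, sizeC (Ξ.xiR R)

end QFInterp


/-! ### Auxiliary infrastructure for stmt9 -/

section Aux
variable {τ : Vocab}

open Classical in
theorem aux_sat_nnfNeg (A : Struc τ) : ∀ {n : ℕ} (φ : Formula τ n) (v : Fin n → A.carrier),
    Sat A (nnfNeg φ) v ↔ ¬ Sat A φ v
  | _, .tru, v => by simp [nnfNeg, Sat]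
  | _, .fls, v => by simp [nnfNeg, Sat]
  | _, .rel R ts, v => by simp [nnfNeg, Sat]
  | _, .nrel R ts, v => by simp [nnfNeg, Sat]
  | _, .eq i j, v => by simp [nnfNeg, Sat]
  | _, .neq i j, v => by simp [nnfNeg, Sat]
  | _, .iAnd I f, v => by
      simp only [nnfNeg, Sat, not_forall]
      exact exists_congr fun i => aux_sat_nnfNeg A (f i) v
  | _, .iOr I f, v => by
      simp only [nnfNeg, Sat, not_exists]
      exact forall_congr' fun i => (aux_sat_nnfNeg A (f i) v).trans (by rfl)
  | _, .ex φ, v => by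
      simp only [nnfNeg, Sat, not_exists]
      exact forall_congr' fun a => aux_sat_nnfNeg A φ _
  | _, .all φ, v => by
      simp only [nnfNeg, Sat, not_forall]
      exact exists_congr fun a => aux_sat_nnfNeg A φ _

theorem aux_nnfNeg_nnfNeg : ∀ {n : ℕ} (φ : Formula τ n), nnfNeg (nnfNeg φ) = φ
  | _, .tru => rfl
  | _, .fls => rfl
  | _, .rel R ts => rfl
  | _, .nrel R ts => rfl
  | _, .eq i j => rfl
  | _, .neq i j => rfl
  | _, .iAnd I f => by
      show Formula.iAnd I (fun i => nnfNeg (nnfNeg (f i))) = _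
      exact congrArg _ (funext fun i => aux_nnfNeg_nnfNeg (f i))
  | _, .iOr I f => by
      show Formula.iOr I (fun i => nnfNeg (nnfNeg (f i))) = _
      exact congrArg _ (funext fun i => aux_nnfNeg_nnfNeg (f i))
  | _, .ex φ => congrArg Formula.ex (aux_nnfNeg_nnfNeg φ)
  | _, .all φ => congrArg Formula.all (aux_nnfNeg_nnfNeg φ)

theorem aux_isQF_nnfNeg : ∀ {n : ℕ} {φ : Formula τ n}, IsQF φ → IsQF (nnfNeg φ) := by
  intro n φ h
  induction h with
  | tru => exact .fls
  | fls => exact .tru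
  | rel R ts => exact .nrel R ts
  | nrel R ts => exact .rel R ts
  | eq i j => exact .neq i j
  | neq i j => exact .eq i j
  | iAnd I hI f h ih => exact .iOr I hI _ ih
  | iOr I hI f h ih => exact .iAnd I hI _ ih

theorem aux_rank_nnfNeg : ∀ {n : ℕ} (φ : Formula τ n), rank (nnfNeg φ) = rank φ
  | _, .tru => rfl
  | _, .fls => rfl
  | _, .rel R ts => rfl
  | _, .nrel R ts => rfl
  | _, .eq i j => rfl
  | _, .neq i j => rfl
  | _, .iAnd I f => by
      show (⨆ i : I, rank (nnfNeg (f i))) = _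
      rw [show (fun i => rank (nnfNeg (f i))) = fun i => rank (f i) from
        funext fun i => aux_rank_nnfNeg (f i)]
      rfl
  | _, .iOr I f => by
      show (⨆ i : I, rank (nnfNeg (f i))) = _
      rw [show (fun i => rank (nnfNeg (f i))) = fun i => rank (f i) from
        funext fun i => aux_rank_nnfNeg (f i)]
      rfl
  | _, .ex φ => by show rank (nnfNeg φ) + 1 = _; rw [aux_rank_nnfNeg φ]; rfl
  | _, .all φ => by show rank (nnfNeg φ) + 1 = _; rw [aux_rank_nnfNeg φ]; rfl

theorem aux_rank_qf : ∀ {n : ℕ} {φ : Formula τ n}, IsQF φ → rank φ = 0 := by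
  intro n φ h
  induction h with
  | iAnd I hI f h ih =>
      show (⨆ i : I, rank (f i)) = 0
      rcases isEmpty_or_nonempty I with hI' | hI'
      · rw [ciSup_of_empty]; rfl
      · exact le_antisymm (ciSup_le fun i => (ih i).le) zero_le
  | iOr I hI f h ih =>
      show (⨆ i : I, rank (f i)) = 0
      rcases isEmpty_or_nonempty I with hI' | hI'
      · rw [ciSup_of_empty]; rfl
      · exact le_antisymm (ciSup_le fun i => (ih i).le) zero_le
  | _ => rfl

theorem aux_snoc_comp {α : Type} {m n : ℕ} (v : Fin n → α) (a : α) (g : Fin m → Fin n) :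
    (fun i : Fin (m+1) =>
        Fin.snoc (α := fun _ => α) v a
          (Fin.snoc (α := fun _ => Fin (n+1)) (fun i => Fin.castSucc (g i)) (Fin.last n) i))
      = Fin.snoc (α := fun _ => α) (fun i => v (g i)) a := by
  funext i
  refine Fin.lastCases ?_ (fun i0 => ?_) i
  · simp
  · simp

theorem aux_sat_relabel (A : Struc τ) : ∀ {m n : ℕ} (g : Fin m → Fin n) (φ : Formula τ m)
    (v : Fin n → A.carrier), Sat A (relabel g φ) v ↔ Sat A φ (fun i => v (g i))
  | _, _, g, .tru, v => Iff.rfl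
  | _, _, g, .fls, v => Iff.rfl
  | _, _, g, .rel R ts, v => Iff.rfl
  | _, _, g, .nrel R ts, v => Iff.rfl
  | _, _, g, .eq i j, v => Iff.rfl
  | _, _, g, .neq i j, v => Iff.rfl
  | _, _, g, .iAnd I f, v => forall_congr' fun i => aux_sat_relabel A g (f i) v
  | _, _, g, .iOr I f, v => exists_congr fun i => aux_sat_relabel A g (f i) v
  | _, _, g, .ex φ, v => by
      show (∃ a, Sat A (relabel _ φ) (Fin.snoc v a)) ↔ ∃ a, Sat A φ _
      refine exists_congr fun a => (aux_sat_relabel A _ φ _).trans ?_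
      rw [aux_snoc_comp v a g]
  | _, _, g, .all φ, v => by
      show (∀ a, Sat A (relabel _ φ) (Fin.snoc v a)) ↔ ∀ a, Sat A φ _
      refine forall_congr' fun a => (aux_sat_relabel A _ φ _).trans ?_
      rw [aux_snoc_comp v a g]

theorem aux_isQF_relabel : ∀ {m n : ℕ} (g : Fin m → Fin n) {φ : Formula τ m},
    IsQF φ → IsQF (relabel g φ) := by
  intro m n g φ h
  induction h with
  | tru => exact .tru
  | fls => exact .fls
  | rel R ts => exact .rel R _
  | nrel R ts => exact .nrel R _
  | eq i j => exact .eq _ _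
  | neq i j => exact .neq _ _
  | iAnd I hI f h ih => exact .iAnd I hI _ ih
  | iOr I hI f h ih => exact .iOr I hI _ ih

theorem aux_rank_relabel : ∀ {m n : ℕ} (g : Fin m → Fin n) (φ : Formula τ m),
    rank (relabel g φ) = rank φ
  | _, _, g, .tru => rfl
  | _, _, g, .fls => rfl
  | _, _, g, .rel R ts => rfl
  | _, _, g, .nrel R ts => rfl
  | _, _, g, .eq i j => rfl
  | _, _, g, .neq i j => rfl
  | _, _, g, .iAnd I f => by
      show (⨆ i : I, rank (relabel g (f i))) = _
      rw [show (fun i => rank (relabel g (f i))) = fun i => rank (f i) from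
        funext fun i => aux_rank_relabel g (f i)]
      rfl
  | _, _, g, .iOr I f => by
      show (⨆ i : I, rank (relabel g (f i))) = _
      rw [show (fun i => rank (relabel g (f i))) = fun i => rank (f i) from
        funext fun i => aux_rank_relabel g (f i)]
      rfl
  | _, _, g, .ex φ => by
      show rank (relabel _ φ) + 1 = _; rw [aux_rank_relabel _ φ]; rfl
  | _, _, g, .all φ => by
      show rank (relabel _ φ) + 1 = _; rw [aux_rank_relabel _ φ]; rfl

end Aux


section Aux2
variable {τ : Vocab}

theorem aux_snoc_val {α : Type} {r : ℕ} (u : Fin r → α) (b : α) (i : Fin (r+1)) :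
    Fin.snoc (α := fun _ => α) u b i = if h : i.val < r then u ⟨i.val, h⟩ else b := by
  rcases i with ⟨iv, hi⟩
  by_cases h : iv < r
  · have he : (⟨iv, hi⟩ : Fin (r+1)) = Fin.castSucc ⟨iv, h⟩ := rfl
    rw [dif_pos h]
    conv_lhs => rw [he]
    rw [Fin.snoc_castSucc]
  · have he : (⟨iv, hi⟩ : Fin (r+1)) = Fin.last r := by
      apply Fin.ext; simp only [Fin.last]; omega
    rw [dif_neg h]
    conv_lhs => rw [he]
    rw [Fin.snoc_last]

theorem aux_append_val {α : Type} {r k : ℕ} (u : Fin r → α) (v : Fin k → α) (i : Fin (r+k)) :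
    Fin.append u v i =
      if h : i.val < r then u ⟨i.val, h⟩ else v ⟨i.val - r, by have := i.isLt; omega⟩ := by
  rcases i with ⟨iv, hi⟩
  by_cases h : iv < r
  · have he : (⟨iv, hi⟩ : Fin (r+k)) = Fin.castAdd k ⟨iv, h⟩ := rfl
    rw [dif_pos h]
    conv_lhs => rw [he]
    rw [Fin.append_left]
  · have he : (⟨iv, hi⟩ : Fin (r+k)) = Fin.natAdd r ⟨iv - r, by omega⟩ := by
      apply Fin.ext; simp only [Fin.natAdd]; omega
    rw [dif_neg h]
    conv_lhs => rw [he]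
    rw [Fin.append_right]

theorem aux_append_zero {α : Type} {r : ℕ} (u : Fin r → α) (b : Fin 0 → α) :
    Fin.append u b = u := by
  funext i
  rw [aux_append_val]
  have h : i.val < r := i.isLt
  rw [dif_pos h]
  exact congrArg u (Fin.ext rfl)

/-- prepend an element to a tuple (by value-level cases) -/
def consF {α : Type} {k : ℕ} (b : α) (c : Fin k → α) : Fin (k+1) → α :=
  fun j => if h : j.val = 0 then b else c ⟨j.val - 1, by have := j.isLt; omega⟩

theorem aux_key1 {α : Type} {r k : ℕ} (u : Fin r → α) (b : α) (c : Fin k → α)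
    (i : Fin ((r+1)+k)) :
    Fin.append u (consF b c) (Fin.cast (by omega) i) = Fin.append (Fin.snoc u b) c i := by
  rcases i with ⟨iv, hi⟩
  simp only [aux_append_val, aux_snoc_val, consF, Fin.cast]
  split_ifs <;>
    first
      | rfl
      | (exfalso; omega)
      | (congr 1; apply Fin.ext; simp only []; omega)

theorem aux_key2 {α : Type} {r k : ℕ} (u : Fin r → α) (b : α) (c : Fin k → α)
    (i : Fin (r+1)) :
    Fin.append u (consF b c) (Fin.castLE (by omega) i)
      = Fin.snoc (α := fun _ => α) u b i := by
  rcases i with ⟨iv, hi⟩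
  simp only [aux_append_val, aux_snoc_val, consF, Fin.castLE]
  split_ifs <;>
    first
      | rfl
      | (exfalso; omega)
      | (congr 1; apply Fin.ext; simp only []; omega)

theorem aux_key3 {α : Type} {r k : ℕ} (u : Fin r → α) (c : Fin k → α) (i : Fin r) :
    Fin.append u c (Fin.castLE (Nat.le_add_right r k) i) = u i := by
  rcases i with ⟨iv, hi⟩
  simp only [aux_append_val, Fin.castLE]
  rw [dif_pos hi]

theorem aux_consF_eta {α : Type} {k : ℕ} (c : Fin (k+1) → α) :
    consF (c ⟨0, by omega⟩) (fun t => c ⟨t.val + 1, by have := t.isLt; omega⟩) = c := by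
  funext j
  rcases j with ⟨jv, hj⟩
  simp only [consF]
  by_cases h : jv = 0
  · rw [dif_pos h]; congr 1; apply Fin.ext; simp [h]
  · rw [dif_neg h]; congr 1; apply Fin.ext; simp; omega

theorem aux_sat_exBlock (A : Struc τ) : ∀ (k : ℕ) {r : ℕ} (ψ : Formula τ (r+k))
    (u : Fin r → A.carrier),
    Sat A (exBlock k ψ) u ↔ ∃ b : Fin k → A.carrier, Sat A ψ (Fin.append u b)
  | 0, r, ψ, u => by
      constructor
      · intro h; exact ⟨fun i => i.elim0, by rwa [aux_append_zero]⟩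
      · rintro ⟨b, hb⟩; rwa [aux_append_zero] at hb
  | k+1, r, ψ, u => by
      rw [show exBlock (k+1) ψ = exBlock k (Formula.ex ψ) from rfl,
        aux_sat_exBlock A k (Formula.ex ψ) u]
      constructor
      · rintro ⟨b, a, hb⟩
        exact ⟨Fin.snoc b a, by rwa [Fin.append_snoc]⟩
      · rintro ⟨c, hc⟩
        refine ⟨Fin.init c, c (Fin.last k), ?_⟩
        show Sat A ψ _
        rw [← Fin.append_snoc, Fin.snoc_init_self]
        exact hc

theorem aux_sat_allBlock (A : Struc τ) : ∀ (k : ℕ) {r : ℕ} (ψ : Formula τ (r+k))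
    (u : Fin r → A.carrier),
    Sat A (allBlock k ψ) u ↔ ∀ b : Fin k → A.carrier, Sat A ψ (Fin.append u b)
  | 0, r, ψ, u => by
      constructor
      · intro h b; rwa [aux_append_zero]
      · intro h; have := h fun i => i.elim0; rwa [aux_append_zero] at this
  | k+1, r, ψ, u => by
      rw [show allBlock (k+1) ψ = allBlock k (Formula.all ψ) from rfl,
        aux_sat_allBlock A k (Formula.all ψ) u]
      constructor
      · intro h c
        have := h (Fin.init c) (c (Fin.last k))
        rwa [← Fin.append_snoc, Fin.snoc_init_self] at this
      · intro h b a
        have := h (Fin.snoc b a)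
        rwa [Fin.append_snoc] at this

theorem aux_tsigma_exBlock {κ : Cardinal} {lam : Ordinal} :
    ∀ (k : ℕ) {r : ℕ} {ψ : Formula τ (r+k)},
    TSigma τ κ lam ψ → TSigma τ κ lam (exBlock k ψ)
  | 0, _, _, h => h
  | k+1, _, _, h => aux_tsigma_exBlock k (TSigma.ex h)

theorem aux_tpi_allBlock {κ : Cardinal} {lam : Ordinal} :
    ∀ (k : ℕ) {r : ℕ} {ψ : Formula τ (r+k)},
    TPi τ κ lam ψ → TPi τ κ lam (allBlock k ψ)
  | 0, _, _, h => h
  | k+1, _, _, h => aux_tpi_allBlock k (TPi.all h)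

theorem aux_rank_exBlock : ∀ (k : ℕ) {r : ℕ} (ψ : Formula τ (r+k)),
    rank (exBlock k ψ) = rank ψ + k
  | 0, _, ψ => by rw [show exBlock 0 ψ = ψ from rfl]; simp
  | k+1, r, ψ => by
      rw [show exBlock (k+1) ψ = exBlock k (Formula.ex ψ) from rfl,
        aux_rank_exBlock k (Formula.ex ψ),
        show rank (Formula.ex ψ) = rank ψ + 1 from rfl]
      push_cast
      ring

theorem aux_rank_allBlock : ∀ (k : ℕ) {r : ℕ} (ψ : Formula τ (r+k)),
    rank (allBlock k ψ) = rank ψ + k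
  | 0, _, ψ => by rw [show allBlock 0 ψ = ψ from rfl]; simp
  | k+1, r, ψ => by
      rw [show allBlock (k+1) ψ = allBlock k (Formula.all ψ) from rfl,
        aux_rank_allBlock k (Formula.all ψ),
        show rank (Formula.all ψ) = rank ψ + 1 from rfl]
      push_cast
      ring

end Aux2


section Aux3
variable {τ : Vocab}

/-- all formulas in a list hold -/
def SatL (A : Struc τ) {r : ℕ} (L : List (Formula τ r)) (u : Fin r → A.carrier) : Prop :=
  ∀ δ ∈ L, Sat A δ u

/-- existential clause side: some extension of the tuple by a block satisfies all lits -/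
def SemE (A : Struc τ) {r : ℕ} (k : ℕ) (M : List (Formula τ (r+k)))
    (u : Fin r → A.carrier) : Prop :=
  ∃ b : Fin k → A.carrier, SatL A M (Fin.append u b)

/-- universal clause side -/
def SemA (A : Struc τ) {r : ℕ} (k : ℕ) (M : List (Formula τ (r+k)))
    (u : Fin r → A.carrier) : Prop :=
  ∀ b : Fin k → A.carrier, ∃ δ ∈ M, Sat A δ (Fin.append u b)

theorem aux_not_semE {A : Struc τ} {r k : ℕ} {M : List (Formula τ (r+k))}
    {u : Fin r → A.carrier} : ¬ SemE A k M u ↔ SemA A k (M.map nnfNeg) u := by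
  unfold SemE SemA SatL
  push_neg
  refine forall_congr' fun b => ?_
  constructor
  · rintro ⟨δ, hδ, hs⟩
    exact ⟨nnfNeg δ, List.mem_map_of_mem hδ, (aux_sat_nnfNeg A δ _).mpr hs⟩
  · rintro ⟨δ', hδ', hs⟩
    obtain ⟨δ, hδ, rfl⟩ := List.mem_map.mp hδ'
    exact ⟨δ, hδ, (aux_sat_nnfNeg A δ _).mp hs⟩

theorem aux_not_semA {A : Struc τ} {r k : ℕ} {M : List (Formula τ (r+k))}
    {u : Fin r → A.carrier} : ¬ SemA A k M u ↔ SemE A k (M.map nnfNeg) u := by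
  unfold SemE SemA SatL
  push_neg
  refine exists_congr fun b => ?_
  constructor
  · intro h δ' hδ'
    obtain ⟨δ, hδ, rfl⟩ := List.mem_map.mp hδ'
    exact (aux_sat_nnfNeg A δ _).mpr (h δ hδ)
  · intro h δ hδ
    exact (aux_sat_nnfNeg A δ _).mp (h _ (List.mem_map_of_mem hδ))

theorem aux_semE_zero {A : Struc τ} {r : ℕ} {M : List (Formula τ (r+0))}
    {u : Fin r → A.carrier} : SemE A 0 M u ↔ SatL A M u := by
  constructor
  · rintro ⟨b, hb⟩; rwa [aux_append_zero] at hb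
  · intro h; exact ⟨fun i => i.elim0, by rwa [aux_append_zero]⟩

theorem aux_semA_zero {A : Struc τ} {r : ℕ} {M : List (Formula τ (r+0))}
    {u : Fin r → A.carrier} : SemA A 0 M u ↔ ∃ δ ∈ M, Sat A δ u := by
  constructor
  · intro h; have := h fun i => i.elim0; rwa [aux_append_zero] at this
  · intro h b; rwa [aux_append_zero]

/-- lits allowed inside a Σ-side block: qf or tΠ of lower level -/
def LowS (lam : Ordinal) {r : ℕ} (δ : Formula τ r) : Prop :=
  IsQF δ ∨ ∃ μ, μ < lam ∧ TPi τ ℵ₀ μ δ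

def LowP (lam : Ordinal) {r : ℕ} (δ : Formula τ r) : Prop :=
  IsQF δ ∨ ∃ μ, μ < lam ∧ TSigma τ ℵ₀ μ δ

def GoodS (lam : Ordinal) (ρ : Cardinal) {r : ℕ} (k : ℕ)
    (M : List (Formula τ (r+k))) : Prop :=
  (k : Cardinal) ≤ ρ ∧ ∀ δ ∈ M, LowS lam δ ∧ (k : Cardinal) + rank δ ≤ ρ

def GoodP (lam : Ordinal) (ρ : Cardinal) {r : ℕ} (k : ℕ)
    (M : List (Formula τ (r+k))) : Prop :=
  (k : Cardinal) ≤ ρ ∧ ∀ δ ∈ M, LowP lam δ ∧ (k : Cardinal) + rank δ ≤ ρ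

/-- Σ-side as a single formula -/
def sideE {r : ℕ} (k : ℕ) (M : List (Formula τ (r+k))) : Formula τ r :=
  exBlock k (Formula.iAnd (Fin M.length) M.get)

def sideA {r : ℕ} (k : ℕ) (M : List (Formula τ (r+k))) : Formula τ r :=
  allBlock k (Formula.iOr (Fin M.length) M.get)

theorem aux_sat_sideE {A : Struc τ} {r k : ℕ} {M : List (Formula τ (r+k))}
    {u : Fin r → A.carrier} : Sat A (sideE k M) u ↔ SemE A k M u := by
  rw [sideE, aux_sat_exBlock]
  refine exists_congr fun b => ?_
  show (∀ t : Fin M.length, Sat A (M.get t) _) ↔ _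
  constructor
  · intro h δ hδ
    obtain ⟨t, ht⟩ := List.mem_iff_get.mp hδ
    rw [← ht]; exact h t
  · intro h t; exact h _ (List.get_mem M t)

theorem aux_sat_sideA {A : Struc τ} {r k : ℕ} {M : List (Formula τ (r+k))}
    {u : Fin r → A.carrier} : Sat A (sideA k M) u ↔ SemA A k M u := by
  rw [sideA, aux_sat_allBlock]
  refine forall_congr' fun b => ?_
  show (∃ t : Fin M.length, Sat A (M.get t) _) ↔ _
  constructor
  · rintro ⟨t, ht⟩; exact ⟨_, List.get_mem M t, ht⟩
  · rintro ⟨δ, hδ, hs⟩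
    obtain ⟨t, ht⟩ := List.mem_iff_get.mp hδ
    exact ⟨t, by rw [ht]; exact hs⟩

theorem aux_sideE_class {lam : Ordinal} {ρ : Cardinal} {r k : ℕ}
    {M : List (Formula τ (r+k))} (h : GoodS lam ρ k M) :
    TSigma τ ℵ₀ lam (sideE k M) ∧ rank (sideE k M) ≤ ρ := by
  constructor
  · apply aux_tsigma_exBlock
    rcases eq_or_ne lam 0 with rfl | hlam
    · have hq : ∀ t : Fin M.length, IsQF (M.get t) := by
        intro t
        rcases (h.2 _ (List.get_mem M t)).1 with hq | ⟨μ, hμ, _⟩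
        · exact hq
        · exact absurd hμ (not_lt_zero (a := μ))
      exact TSigma.qf (IsQF.iAnd _ inferInstance _ hq)
    · have hpos : 0 < lam := pos_iff_ne_zero.mpr hlam
      have hx : ∀ t : Fin M.length, ∃ μ, μ < lam ∧ TPi τ ℵ₀ μ (M.get t) := by
        intro t
        rcases (h.2 _ (List.get_mem M t)).1 with hq | hg
        · exact ⟨0, hpos, TPi.qf hq⟩
        · exact hg
      choose lam' hlt hp using hx
      refine TSigma.conj _ _ ?_ lam' hlt hp
      rw [Cardinal.mk_fin]; exact Cardinal.nat_lt_aleph0 _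
  · rw [sideE, aux_rank_exBlock]
    rcases Nat.eq_zero_or_pos M.length with h0 | hpos
    · have hz : rank (Formula.iAnd (Fin M.length) M.get) = 0 := by
        show (⨆ t : Fin M.length, rank (M.get t)) = 0
        haveI : IsEmpty (Fin M.length) := by rw [h0]; exact Fin.isEmpty'
        rw [ciSup_of_empty]; rfl
      rw [hz, zero_add]; exact h.1
    · haveI : Nonempty (Fin M.length) := ⟨⟨0, hpos⟩⟩
      obtain ⟨t₀, ht₀⟩ := Finite.exists_max (fun t : Fin M.length => rank (M.get t))
      have h1 : rank (Formula.iAnd (Fin M.length) M.get) ≤ rank (M.get t₀) := ciSup_le ht₀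
      calc rank (Formula.iAnd (Fin M.length) M.get) + (k : Cardinal)
          ≤ rank (M.get t₀) + k := add_le_add_left h1 _
        _ = (k : Cardinal) + rank (M.get t₀) := add_comm _ _
        _ ≤ ρ := (h.2 _ (List.get_mem M t₀)).2

theorem aux_sideA_class {lam : Ordinal} {ρ : Cardinal} {r k : ℕ}
    {M : List (Formula τ (r+k))} (h : GoodP lam ρ k M) :
    TPi τ ℵ₀ lam (sideA k M) ∧ rank (sideA k M) ≤ ρ := by
  constructor
  · apply aux_tpi_allBlock
    rcases eq_or_ne lam 0 with rfl | hlam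
    · have hq : ∀ t : Fin M.length, IsQF (M.get t) := by
        intro t
        rcases (h.2 _ (List.get_mem M t)).1 with hq | ⟨μ, hμ, _⟩
        · exact hq
        · exact absurd hμ (not_lt_zero (a := μ))
      exact TPi.qf (IsQF.iOr _ inferInstance _ hq)
    · have hpos : 0 < lam := pos_iff_ne_zero.mpr hlam
      have hx : ∀ t : Fin M.length, ∃ μ, μ < lam ∧ TSigma τ ℵ₀ μ (M.get t) := by
        intro t
        rcases (h.2 _ (List.get_mem M t)).1 with hq | hg
        · exact ⟨0, hpos, TSigma.qf hq⟩
        · exact hg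
      choose lam' hlt hp using hx
      refine TPi.disj _ _ ?_ lam' hlt hp
      rw [Cardinal.mk_fin]; exact Cardinal.nat_lt_aleph0 _
  · rw [sideA, aux_rank_allBlock]
    rcases Nat.eq_zero_or_pos M.length with h0 | hpos
    · have hz : rank (Formula.iOr (Fin M.length) M.get) = 0 := by
        show (⨆ t : Fin M.length, rank (M.get t)) = 0
        haveI : IsEmpty (Fin M.length) := by rw [h0]; exact Fin.isEmpty'
        rw [ciSup_of_empty]; rfl
      rw [hz, zero_add]; exact h.1
    · haveI : Nonempty (Fin M.length) := ⟨⟨0, hpos⟩⟩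
      obtain ⟨t₀, ht₀⟩ := Finite.exists_max (fun t : Fin M.length => rank (M.get t))
      have h1 : rank (Formula.iOr (Fin M.length) M.get) ≤ rank (M.get t₀) := ciSup_le ht₀
      calc rank (Formula.iOr (Fin M.length) M.get) + (k : Cardinal)
          ≤ rank (M.get t₀) + k := add_le_add_left h1 _
        _ = (k : Cardinal) + rank (M.get t₀) := add_comm _ _
        _ ≤ ρ := (h.2 _ (List.get_mem M t₀)).2

theorem aux_tsigma_relabel {lam : Ordinal} {n : ℕ} {φ : Formula τ n}
    (h : TSigma τ ℵ₀ lam φ) :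
    ∀ {n' : ℕ} (g : Fin n → Fin n'), TSigma τ ℵ₀ lam (relabel g φ) := by
  refine TSigma.rec (κ := ℵ₀) (τ := τ)
    (motive_1 := fun lam {n} φ _ => ∀ {n' : ℕ} (g : Fin n → Fin n'),
      TSigma τ ℵ₀ lam (relabel g φ))
    (motive_2 := fun lam {n} φ _ => ∀ {n' : ℕ} (g : Fin n → Fin n'),
      TPi τ ℵ₀ lam (relabel g φ))
    ?_ ?_ ?_ ?_ ?_ ?_ h
  · intro n φ hq n' g; exact TSigma.qf (aux_isQF_relabel g hq)
  · intro n lam I f hI lam' hlt hp ih n' g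
    exact TSigma.conj I _ hI lam' hlt fun i => ih i g
  · intro n lam φ hs ih n' g
    exact TSigma.ex (ih _)
  · intro n φ hq n' g; exact TPi.qf (aux_isQF_relabel g hq)
  · intro n lam I f hI lam' hlt hp ih n' g
    exact TPi.disj I _ hI lam' hlt fun i => ih i g
  · intro n lam φ hs ih n' g
    exact TPi.all (ih _)

theorem aux_tpi_relabel {lam : Ordinal} {n : ℕ} {φ : Formula τ n}
    (h : TPi τ ℵ₀ lam φ) :
    ∀ {n' : ℕ} (g : Fin n → Fin n'), TPi τ ℵ₀ lam (relabel g φ) := by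
  refine TPi.rec (κ := ℵ₀) (τ := τ)
    (motive_1 := fun lam {n} φ _ => ∀ {n' : ℕ} (g : Fin n → Fin n'),
      TSigma τ ℵ₀ lam (relabel g φ))
    (motive_2 := fun lam {n} φ _ => ∀ {n' : ℕ} (g : Fin n → Fin n'),
      TPi τ ℵ₀ lam (relabel g φ))
    ?_ ?_ ?_ ?_ ?_ ?_ h
  · intro n φ hq n' g; exact TSigma.qf (aux_isQF_relabel g hq)
  · intro n lam I f hI lam' hlt hp ih n' g
    exact TSigma.conj I _ hI lam' hlt fun i => ih i g
  · intro n lam φ hs ih n' g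
    exact TSigma.ex (ih _)
  · intro n φ hq n' g; exact TPi.qf (aux_isQF_relabel g hq)
  · intro n lam I f hI lam' hlt hp ih n' g
    exact TPi.disj I _ hI lam' hlt fun i => ih i g
  · intro n lam φ hs ih n' g
    exact TPi.all (ih _)

theorem aux_nnfNeg_sigma {lam : Ordinal} {n : ℕ} {φ : Formula τ n}
    (h : TSigma τ ℵ₀ lam φ) : TPi τ ℵ₀ lam (nnfNeg φ) := by
  refine TSigma.rec (κ := ℵ₀) (τ := τ)
    (motive_1 := fun lam {n} φ _ => TPi τ ℵ₀ lam (nnfNeg φ))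
    (motive_2 := fun lam {n} φ _ => TSigma τ ℵ₀ lam (nnfNeg φ))
    ?_ ?_ ?_ ?_ ?_ ?_ h
  · intro n φ hq; exact TPi.qf (aux_isQF_nnfNeg hq)
  · intro n lam I f hI lam' hlt hp ih
    exact TPi.disj I _ hI lam' hlt ih
  · intro n lam φ hs ih
    exact TPi.all ih
  · intro n φ hq; exact TSigma.qf (aux_isQF_nnfNeg hq)
  · intro n lam I f hI lam' hlt hp ih
    exact TSigma.conj I _ hI lam' hlt ih
  · intro n lam φ hs ih
    exact TSigma.ex ih

theorem aux_nnfNeg_pi {lam : Ordinal} {n : ℕ} {φ : Formula τ n}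
    (h : TPi τ ℵ₀ lam φ) : TSigma τ ℵ₀ lam (nnfNeg φ) := by
  refine TPi.rec (κ := ℵ₀) (τ := τ)
    (motive_1 := fun lam {n} φ _ => TPi τ ℵ₀ lam (nnfNeg φ))
    (motive_2 := fun lam {n} φ _ => TSigma τ ℵ₀ lam (nnfNeg φ))
    ?_ ?_ ?_ ?_ ?_ ?_ h
  · intro n φ hq; exact TPi.qf (aux_isQF_nnfNeg hq)
  · intro n lam I f hI lam' hlt hp ih
    exact TPi.disj I _ hI lam' hlt ih
  · intro n lam φ hs ih
    exact TPi.all ih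
  · intro n φ hq; exact TSigma.qf (aux_isQF_nnfNeg hq)
  · intro n lam I f hI lam' hlt hp ih
    exact TSigma.conj I _ hI lam' hlt ih
  · intro n lam φ hs ih
    exact TSigma.ex ih

theorem aux_lowS_nnfNeg {lam : Ordinal} {r : ℕ} {δ : Formula τ r}
    (h : LowS lam δ) : LowP lam (nnfNeg δ) := by
  rcases h with hq | ⟨μ, hμ, hp⟩
  · exact Or.inl (aux_isQF_nnfNeg hq)
  · exact Or.inr ⟨μ, hμ, aux_nnfNeg_pi hp⟩

theorem aux_lowP_nnfNeg {lam : Ordinal} {r : ℕ} {δ : Formula τ r}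
    (h : LowP lam δ) : LowS lam (nnfNeg δ) := by
  rcases h with hq | ⟨μ, hμ, hp⟩
  · exact Or.inl (aux_isQF_nnfNeg hq)
  · exact Or.inr ⟨μ, hμ, aux_nnfNeg_sigma hp⟩

theorem aux_goodS_nnfNeg {lam : Ordinal} {ρ : Cardinal} {r k : ℕ}
    {M : List (Formula τ (r+k))} (h : GoodS lam ρ k M) :
    GoodP lam ρ k (M.map nnfNeg) := by
  refine ⟨h.1, ?_⟩
  intro δ' hδ'
  obtain ⟨δ, hδ, rfl⟩ := List.mem_map.mp hδ'
  exact ⟨aux_lowS_nnfNeg (h.2 δ hδ).1, by rw [aux_rank_nnfNeg]; exact (h.2 δ hδ).2⟩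

theorem aux_goodP_nnfNeg {lam : Ordinal} {ρ : Cardinal} {r k : ℕ}
    {M : List (Formula τ (r+k))} (h : GoodP lam ρ k M) :
    GoodS lam ρ k (M.map nnfNeg) := by
  refine ⟨h.1, ?_⟩
  intro δ' hδ'
  obtain ⟨δ, hδ, rfl⟩ := List.mem_map.mp hδ'
  exact ⟨aux_lowP_nnfNeg (h.2 δ hδ).1, by rw [aux_rank_nnfNeg]; exact (h.2 δ hδ).2⟩

theorem aux_goodS_mono {lam : Ordinal} {ρ ρ' : Cardinal} {r k : ℕ}
    {M : List (Formula τ (r+k))} (h : GoodS lam ρ k M) (hρ : ρ ≤ ρ') :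
    GoodS lam ρ' k M :=
  ⟨h.1.trans hρ, fun δ hδ => ⟨(h.2 δ hδ).1, (h.2 δ hδ).2.trans hρ⟩⟩

theorem aux_goodP_mono {lam : Ordinal} {ρ ρ' : Cardinal} {r k : ℕ}
    {M : List (Formula τ (r+k))} (h : GoodP lam ρ k M) (hρ : ρ ≤ ρ') :
    GoodP lam ρ' k M :=
  ⟨h.1.trans hρ, fun δ hδ => ⟨(h.2 δ hδ).1, (h.2 δ hδ).2.trans hρ⟩⟩

end Aux3


section Aux4
variable {τ : Vocab}

theorem aux_adu_left {r r₁ r₂ : ℕ} {A₁ A₂ : Struc τ}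
    (u₁ : Fin r₁ → A₁.carrier) (u₂ : Fin r₂ → A₂.carrier)
    (e : Fin r → Fin r₁ ⊕ Fin r₂) (S : τ.Rel) (ts : Fin (τ.arity S) → Fin r) :
    (∃ w₁ : Fin (τ.arity S) → A₁.carrier, A₁.rel S w₁ ∧
      (fun i => Sum.map u₁ u₂ (e (ts i))) = fun i => Sum.inl (w₁ i)) ↔
    ∃ h : ∀ i, ∃ a, e (ts i) = Sum.inl a,
      A₁.rel S fun i => u₁ (Classical.choose (h i)) := by
  constructor
  · rintro ⟨w₁, hrel, heq⟩
    have hP : ∀ i, ∃ a, e (ts i) = Sum.inl a := by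
      intro i
      have hc := congrFun heq i
      rcases hee : e (ts i) with a | b
      · exact ⟨a, rfl⟩
      · rw [hee] at hc; simp at hc
    refine ⟨hP, ?_⟩
    have hfe : (fun i => u₁ (Classical.choose (hP i))) = w₁ := by
      funext i
      have hc := congrFun heq i
      rw [Classical.choose_spec (hP i)] at hc
      simpa using hc
    rw [hfe]; exact hrel
  · rintro ⟨h, hrel⟩
    refine ⟨fun i => u₁ (Classical.choose (h i)), hrel, ?_⟩
    funext i
    rw [Classical.choose_spec (h i)]
    rfl

theorem aux_adu_right {r r₁ r₂ : ℕ} {A₁ A₂ : Struc τ}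
    (u₁ : Fin r₁ → A₁.carrier) (u₂ : Fin r₂ → A₂.carrier)
    (e : Fin r → Fin r₁ ⊕ Fin r₂) (S : τ.Rel) (ts : Fin (τ.arity S) → Fin r) :
    (∃ w₂ : Fin (τ.arity S) → A₂.carrier, A₂.rel S w₂ ∧
      (fun i => Sum.map u₁ u₂ (e (ts i))) = fun i => Sum.inr (w₂ i)) ↔
    ∃ h : ∀ i, ∃ b, e (ts i) = Sum.inr b,
      A₂.rel S fun i => u₂ (Classical.choose (h i)) := by
  constructor
  · rintro ⟨w₂, hrel, heq⟩
    have hP : ∀ i, ∃ b, e (ts i) = Sum.inr b := by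
      intro i
      have hc := congrFun heq i
      rcases hee : e (ts i) with a | b
      · rw [hee] at hc; simp at hc
      · exact ⟨b, rfl⟩
    refine ⟨hP, ?_⟩
    have hfe : (fun i => u₂ (Classical.choose (hP i))) = w₂ := by
      funext i
      have hc := congrFun heq i
      rw [Classical.choose_spec (hP i)] at hc
      simpa using hc
    rw [hfe]; exact hrel
  · rintro ⟨h, hrel⟩
    refine ⟨fun i => u₂ (Classical.choose (h i)), hrel, ?_⟩
    funext i
    rw [Classical.choose_spec (h i)]
    rfl

theorem aux_qfdec {r : ℕ} {ψ : Formula (annotV τ) r} (hq : IsQF ψ) :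
    ∀ (r₁ r₂ : ℕ) (e : Fin r → Fin r₁ ⊕ Fin r₂),
    ∃ (J : Type) (_ : Finite J) (M₁ : J → List (Formula τ r₁))
      (M₂ : J → List (Formula τ r₂)),
      (∀ j, (∀ δ ∈ M₁ j, IsQF δ) ∧ (∀ δ ∈ M₂ j, IsQF δ)) ∧
      ∀ (A₁ A₂ : Struc τ) (u₁ : Fin r₁ → A₁.carrier) (u₂ : Fin r₂ → A₂.carrier),
        Sat (adu A₁ A₂) ψ (fun i => Sum.map u₁ u₂ (e i)) ↔
          ∃ j, SatL A₁ (M₁ j) u₁ ∧ SatL A₂ (M₂ j) u₂ := by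
  induction hq with
  | tru =>
      intro r₁ r₂ e
      exact ⟨PUnit, inferInstance, fun _ => [], fun _ => [],
        fun _ => ⟨by simp, by simp⟩,
        fun A₁ A₂ u₁ u₂ => by
          simp [Sat, SatL]⟩
  | fls =>
      intro r₁ r₂ e
      exact ⟨Empty, inferInstance, fun j => j.elim, fun j => j.elim,
        fun j => j.elim,
        fun A₁ A₂ u₁ u₂ => by
          constructor
          · intro h; exact h.elim
          · rintro ⟨j, -⟩; exact j.elim⟩
  | rel R ts =>
      intro r₁ r₂ e
      match R with
      | none =>
          rcases he : e (ts ⟨0, Nat.one_pos⟩) with a | b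
          · refine ⟨PUnit, inferInstance, fun _ => [], fun _ => [],
              fun _ => ⟨by simp, by simp⟩, ?_⟩
            intro A₁ A₂ u₁ u₂
            constructor
            · intro _; exact ⟨PUnit.unit, by simp [SatL], by simp [SatL]⟩
            · intro _
              show (Sum.map u₁ u₂ (e (ts ⟨0, Nat.one_pos⟩))).isLeft = true
              rw [he]; rfl
          · refine ⟨Empty, inferInstance, fun j => j.elim, fun j => j.elim,
              fun j => j.elim, ?_⟩
            intro A₁ A₂ u₁ u₂
            constructor
            · intro h
              exfalso
              have h' : (Sum.map u₁ u₂ (e (ts ⟨0, Nat.one_pos⟩))).isLeft = true := h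
              rw [he] at h'
              simp at h'
            · rintro ⟨j, -⟩; exact j.elim
      | some S =>
          refine ⟨PLift (∀ i, ∃ a, e (ts i) = Sum.inl a) ⊕
              PLift (∀ i, ∃ b, e (ts i) = Sum.inr b), inferInstance,
            fun j => match j with
              | .inl h => [Formula.rel S (fun i => Classical.choose (h.down i))]
              | .inr _ => [],
            fun j => match j with
              | .inl _ => []
              | .inr h => [Formula.rel S (fun i => Classical.choose (h.down i))],
            ?_, ?_⟩
          · rintro (h | h)
            · exact ⟨by intro δ hδ; simp at hδ; subst hδ; exact IsQF.rel _ _, by simp⟩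
            · exact ⟨by simp, by intro δ hδ; simp at hδ; subst hδ; exact IsQF.rel _ _⟩
          · intro A₁ A₂ u₁ u₂
            show ((∃ w₁ : Fin (τ.arity S) → A₁.carrier, A₁.rel S w₁ ∧
                (fun i => Sum.map u₁ u₂ (e (ts i))) = fun i => Sum.inl (w₁ i)) ∨
              (∃ w₂ : Fin (τ.arity S) → A₂.carrier, A₂.rel S w₂ ∧
                (fun i => Sum.map u₁ u₂ (e (ts i))) = fun i => Sum.inr (w₂ i))) ↔ _
            refine Iff.trans
              (or_congr (aux_adu_left u₁ u₂ e S ts) (aux_adu_right u₁ u₂ e S ts)) ?_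
            constructor
            · rintro (⟨h, hrel⟩ | ⟨h, hrel⟩)
              · exact ⟨Sum.inl ⟨h⟩, by simpa [SatL, Sat] using hrel, by simp [SatL]⟩
              · exact ⟨Sum.inr ⟨h⟩, by simp [SatL], by simpa [SatL, Sat] using hrel⟩
            · rintro ⟨(h | h), hs1, hs2⟩
              · left
                exact ⟨h.down, by simpa [SatL, Sat] using hs1⟩
              · right
                exact ⟨h.down, by simpa [SatL, Sat] using hs2⟩
  | nrel R ts =>
      intro r₁ r₂ e
      match R with
      | none =>
          rcases he : e (ts ⟨0, Nat.one_pos⟩) with a | b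
          · refine ⟨Empty, inferInstance, fun j => j.elim, fun j => j.elim,
              fun j => j.elim, ?_⟩
            intro A₁ A₂ u₁ u₂
            constructor
            · intro h
              exfalso
              apply h
              show (Sum.map u₁ u₂ (e (ts ⟨0, Nat.one_pos⟩))).isLeft = true
              rw [he]; rfl
            · rintro ⟨j, -⟩; exact j.elim
          · refine ⟨PUnit, inferInstance, fun _ => [], fun _ => [],
              fun _ => ⟨by simp, by simp⟩, ?_⟩
            intro A₁ A₂ u₁ u₂
            constructor
            · intro _; exact ⟨PUnit.unit, by simp [SatL], by simp [SatL]⟩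
            · intro _ h
              have h' : (Sum.map u₁ u₂ (e (ts ⟨0, Nat.one_pos⟩))).isLeft = true := h
              rw [he] at h'
              simp at h'
      | some S =>
          classical
          refine ⟨PUnit, inferInstance,
            fun _ => if h : (∀ i, ∃ a, e (ts i) = Sum.inl a) then
              [Formula.nrel S (fun i => Classical.choose (h i))] else [],
            fun _ => if h : (∀ i, ∃ b, e (ts i) = Sum.inr b) then
              [Formula.nrel S (fun i => Classical.choose (h i))] else [],
            ?_, ?_⟩
          · intro j
            constructor
            · intro δ hδ
              split_ifs at hδ with h
              · simp at hδ; subst hδ; exact IsQF.nrel _ _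
              · simp at hδ
            · intro δ hδ
              split_ifs at hδ with h
              · simp at hδ; subst hδ; exact IsQF.nrel _ _
              · simp at hδ
          · intro A₁ A₂ u₁ u₂
            show ¬ ((∃ w₁ : Fin (τ.arity S) → A₁.carrier, A₁.rel S w₁ ∧
                (fun i => Sum.map u₁ u₂ (e (ts i))) = fun i => Sum.inl (w₁ i)) ∨
              (∃ w₂ : Fin (τ.arity S) → A₂.carrier, A₂.rel S w₂ ∧
                (fun i => Sum.map u₁ u₂ (e (ts i))) = fun i => Sum.inr (w₂ i))) ↔ _
            refine Iff.trans (not_congr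
              (or_congr (aux_adu_left u₁ u₂ e S ts) (aux_adu_right u₁ u₂ e S ts))) ?_
            push_neg
            constructor
            · rintro ⟨h1, h2⟩
              refine ⟨PUnit.unit, ?_, ?_⟩
              · intro δ hδ
                split_ifs at hδ with h
                · simp at hδ; subst hδ
                  exact h1 h
                · simp at hδ
              · intro δ hδ
                split_ifs at hδ with h
                · simp at hδ; subst hδ
                  exact h2 h
                · simp at hδ
            · rintro ⟨-, hs1, hs2⟩
              constructor
              · intro h
                exact hs1 (Formula.nrel S (fun i => Classical.choose (h i)))
                  (by split_ifs with h'
                      · simp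
                      · exact absurd h h')
              · intro h
                exact hs2 (Formula.nrel S (fun i => Classical.choose (h i)))
                  (by split_ifs with h'
                      · simp
                      · exact absurd h h')
  | eq i1 i2 =>
      intro r₁ r₂ e
      rcases he1 : e i1 with a1 | b1 <;> rcases he2 : e i2 with a2 | b2
      · -- both left
        refine ⟨PUnit, inferInstance, fun _ => [Formula.eq a1 a2], fun _ => [],
          fun _ => ⟨by intro δ hδ; simp at hδ; subst hδ; exact IsQF.eq _ _, by simp⟩, ?_⟩
        intro A₁ A₂ u₁ u₂
        show Sum.map u₁ u₂ (e i1) = Sum.map u₁ u₂ (e i2) ↔ _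
        rw [he1, he2]
        simp [SatL, Sat]
      · refine ⟨Empty, inferInstance, fun j => j.elim, fun j => j.elim, fun j => j.elim, ?_⟩
        intro A₁ A₂ u₁ u₂
        constructor
        · intro h
          have h' : Sum.map u₁ u₂ (e i1) = Sum.map u₁ u₂ (e i2) := h
          rw [he1, he2] at h'
          simp at h'
        · rintro ⟨j, -⟩; exact j.elim
      · refine ⟨Empty, inferInstance, fun j => j.elim, fun j => j.elim, fun j => j.elim, ?_⟩
        intro A₁ A₂ u₁ u₂
        constructor
        · intro h
          have h' : Sum.map u₁ u₂ (e i1) = Sum.map u₁ u₂ (e i2) := h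
          rw [he1, he2] at h'
          simp at h'
        · rintro ⟨j, -⟩; exact j.elim
      · refine ⟨PUnit, inferInstance, fun _ => [], fun _ => [Formula.eq b1 b2],
          fun _ => ⟨by simp, by intro δ hδ; simp at hδ; subst hδ; exact IsQF.eq _ _⟩, ?_⟩
        intro A₁ A₂ u₁ u₂
        show Sum.map u₁ u₂ (e i1) = Sum.map u₁ u₂ (e i2) ↔ _
        rw [he1, he2]
        simp [SatL, Sat]
  | neq i1 i2 =>
      intro r₁ r₂ e
      rcases he1 : e i1 with a1 | b1 <;> rcases he2 : e i2 with a2 | b2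
      · refine ⟨PUnit, inferInstance, fun _ => [Formula.neq a1 a2], fun _ => [],
          fun _ => ⟨by intro δ hδ; simp at hδ; subst hδ; exact IsQF.neq _ _, by simp⟩, ?_⟩
        intro A₁ A₂ u₁ u₂
        show Sum.map u₁ u₂ (e i1) ≠ Sum.map u₁ u₂ (e i2) ↔ _
        rw [he1, he2]
        simp [SatL, Sat]
      · refine ⟨PUnit, inferInstance, fun _ => [], fun _ => [],
          fun _ => ⟨by simp, by simp⟩, ?_⟩
        intro A₁ A₂ u₁ u₂
        constructor
        · intro _; exact ⟨PUnit.unit, by simp [SatL], by simp [SatL]⟩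
        · intro _
          show Sum.map u₁ u₂ (e i1) ≠ Sum.map u₁ u₂ (e i2)
          rw [he1, he2]
          simp
      · refine ⟨PUnit, inferInstance, fun _ => [], fun _ => [],
          fun _ => ⟨by simp, by simp⟩, ?_⟩
        intro A₁ A₂ u₁ u₂
        constructor
        · intro _; exact ⟨PUnit.unit, by simp [SatL], by simp [SatL]⟩
        · intro _
          show Sum.map u₁ u₂ (e i1) ≠ Sum.map u₁ u₂ (e i2)
          rw [he1, he2]
          simp
      · refine ⟨PUnit, inferInstance, fun _ => [], fun _ => [Formula.neq b1 b2],
          fun _ => ⟨by simp, by intro δ hδ; simp at hδ; subst hδ; exact IsQF.neq _ _⟩, ?_⟩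
        intro A₁ A₂ u₁ u₂
        show Sum.map u₁ u₂ (e i1) ≠ Sum.map u₁ u₂ (e i2) ↔ _
        rw [he1, he2]
        simp [SatL, Sat]
  | iAnd I hI f h ih =>
      intro r₁ r₂ e
      haveI : Finite I := hI
      haveI := Fintype.ofFinite I
      choose J hJfin M₁ M₂ hqf hsem using fun i => ih i r₁ r₂ e
      haveI : ∀ i, Finite (J i) := hJfin
      refine ⟨∀ i, J i, inferInstance,
        fun g => (Finset.univ : Finset I).toList.flatMap (fun i => M₁ i (g i)),
        fun g => (Finset.univ : Finset I).toList.flatMap (fun i => M₂ i (g i)),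
        ?_, ?_⟩
      · intro g
        constructor
        · intro δ hδ
          rw [List.mem_flatMap] at hδ
          obtain ⟨i, -, hδ⟩ := hδ
          exact (hqf i (g i)).1 δ hδ
        · intro δ hδ
          rw [List.mem_flatMap] at hδ
          obtain ⟨i, -, hδ⟩ := hδ
          exact (hqf i (g i)).2 δ hδ
      · intro A₁ A₂ u₁ u₂
        show (∀ i, Sat (adu A₁ A₂) (f i) _) ↔ _
        constructor
        · intro hall
          have h1 : ∀ i, ∃ j, SatL A₁ (M₁ i j) u₁ ∧ SatL A₂ (M₂ i j) u₂ :=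
            fun i => (hsem i A₁ A₂ u₁ u₂).mp (hall i)
          obtain ⟨g, hg⟩ := Classical.skolem.mp h1
          refine ⟨g, ?_, ?_⟩
          · intro δ hδ
            rw [List.mem_flatMap] at hδ
            obtain ⟨i, -, hδ⟩ := hδ
            exact (hg i).1 δ hδ
          · intro δ hδ
            rw [List.mem_flatMap] at hδ
            obtain ⟨i, -, hδ⟩ := hδ
            exact (hg i).2 δ hδ
        · rintro ⟨g, hs1, hs2⟩ i
          refine (hsem i A₁ A₂ u₁ u₂).mpr ⟨g i, ?_, ?_⟩
          · intro δ hδ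
            exact hs1 δ (List.mem_flatMap.mpr ⟨i, by simp, hδ⟩)
          · intro δ hδ
            exact hs2 δ (List.mem_flatMap.mpr ⟨i, by simp, hδ⟩)
  | iOr I hI f h ih =>
      intro r₁ r₂ e
      haveI : Finite I := hI
      choose J hJfin M₁ M₂ hqf hsem using fun i => ih i r₁ r₂ e
      haveI : ∀ i, Finite (J i) := hJfin
      refine ⟨Σ i, J i, inferInstance,
        fun p => M₁ p.1 p.2, fun p => M₂ p.1 p.2, fun p => hqf p.1 p.2, ?_⟩
      intro A₁ A₂ u₁ u₂
      show (∃ i, Sat (adu A₁ A₂) (f i) _) ↔ _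
      constructor
      · rintro ⟨i, hi⟩
        obtain ⟨j, hj⟩ := (hsem i A₁ A₂ u₁ u₂).mp hi
        exact ⟨⟨i, j⟩, hj⟩
      · rintro ⟨⟨i, j⟩, hj⟩
        exact ⟨i, (hsem i A₁ A₂ u₁ u₂).mpr ⟨j, hj⟩⟩

end Aux4


section Aux5
variable {τ : Vocab}

/-- quantifier-free translation through a qf interpretation -/
def qfTr (Ξ : QFInterp (annotV τ) τ) : ∀ {r : ℕ}, Formula τ r → Formula (annotV τ) r
  | _, .tru => .tru
  | _, .fls => .fls
  | _, .rel R ts => relabel ts (Ξ.xiR R)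
  | _, .nrel R ts => nnfNeg (relabel ts (Ξ.xiR R))
  | _, .eq i j => .eq i j
  | _, .neq i j => .neq i j
  | _, .iAnd I f => .iAnd I (fun i => qfTr Ξ (f i))
  | _, .iOr I f => .iOr I (fun i => qfTr Ξ (f i))
  | _, .ex _ => .tru
  | _, .all _ => .tru

theorem aux_isQF_qfTr (Ξ : QFInterp (annotV τ) τ) {r : ℕ} {φ : Formula τ r}
    (hq : IsQF φ) : IsQF (qfTr Ξ φ) := by
  induction hq with
  | tru => exact .tru
  | fls => exact .fls
  | rel R ts => exact aux_isQF_relabel ts (Ξ.hR R)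
  | nrel R ts => exact aux_isQF_nnfNeg (aux_isQF_relabel ts (Ξ.hR R))
  | eq i j => exact .eq i j
  | neq i j => exact .neq i j
  | iAnd I hI f h ih => exact .iAnd I hI _ ih
  | iOr I hI f h ih => exact .iOr I hI _ ih

theorem aux_sat_qfTr (Ξ : QFInterp (annotV τ) τ) (B : Struc (annotV τ)) {r : ℕ}
    {φ : Formula τ r} (hq : IsQF φ) (v : Fin r → (Ξ.app B).carrier) :
    Sat (Ξ.app B) φ v ↔ Sat B (qfTr Ξ φ) (fun i => (v i).1) := by
  induction hq with
  | tru => exact Iff.rfl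
  | fls => exact Iff.rfl
  | rel R ts =>
      simp only [qfTr]
      exact (aux_sat_relabel B ts (Ξ.xiR R) (fun i => (v i).1)).symm
  | nrel R ts =>
      simp only [qfTr]
      rw [aux_sat_nnfNeg, aux_sat_relabel]
      exact Iff.rfl
  | eq i j => exact Subtype.ext_iff
  | neq i j => exact not_congr Subtype.ext_iff
  | iAnd I hI f h ih => exact forall_congr' fun i => ih i
  | iOr I hI f h ih => exact exists_congr fun i => ih i

variable (Ξ : QFInterp (annotV τ) τ)

/-- the assignment pattern `e` hits only elements satisfying the universe formula -/
def Guarded (A₁ A₂ : Struc τ) {r r₁ r₂ : ℕ} (e : Fin r → Fin r₁ ⊕ Fin r₂)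
    (u₁ : Fin r₁ → A₁.carrier) (u₂ : Fin r₂ → A₂.carrier) : Prop :=
  ∀ i, Sat (adu A₁ A₂) Ξ.xiU (fun _ => Sum.map u₁ u₂ (e i))

/-- existence of a Σ-type Feferman–Vaught style DNF decomposition -/
def DecS (lam : Ordinal) (ρ : Cardinal) {r : ℕ} (φ : Formula τ r) : Prop :=
  ∀ (r₁ r₂ : ℕ) (e : Fin r → Fin r₁ ⊕ Fin r₂),
  ∃ (J : Type) (_ : Finite J) (k₁ k₂ : J → ℕ)
    (M₁ : ∀ j, List (Formula τ (r₁ + k₁ j))) (M₂ : ∀ j, List (Formula τ (r₂ + k₂ j))),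
    (∀ j, GoodS lam ρ (k₁ j) (M₁ j) ∧ GoodS lam ρ (k₂ j) (M₂ j)) ∧
    ∀ (A₁ A₂ : Struc τ) (u₁ : Fin r₁ → A₁.carrier) (u₂ : Fin r₂ → A₂.carrier)
      (hg : Guarded Ξ A₁ A₂ e u₁ u₂),
      Sat (Ξ.app (adu A₁ A₂)) φ (fun i => ⟨Sum.map u₁ u₂ (e i), hg i⟩) ↔
        ∃ j, SemE A₁ (k₁ j) (M₁ j) u₁ ∧ SemE A₂ (k₂ j) (M₂ j) u₂

/-- existence of a Π-type CNF decomposition -/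
def DecP (lam : Ordinal) (ρ : Cardinal) {r : ℕ} (φ : Formula τ r) : Prop :=
  ∀ (r₁ r₂ : ℕ) (e : Fin r → Fin r₁ ⊕ Fin r₂),
  ∃ (J : Type) (_ : Finite J) (k₁ k₂ : J → ℕ)
    (M₁ : ∀ j, List (Formula τ (r₁ + k₁ j))) (M₂ : ∀ j, List (Formula τ (r₂ + k₂ j))),
    (∀ j, GoodP lam ρ (k₁ j) (M₁ j) ∧ GoodP lam ρ (k₂ j) (M₂ j)) ∧
    ∀ (A₁ A₂ : Struc τ) (u₁ : Fin r₁ → A₁.carrier) (u₂ : Fin r₂ → A₂.carrier)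
      (hg : Guarded Ξ A₁ A₂ e u₁ u₂),
      Sat (Ξ.app (adu A₁ A₂)) φ (fun i => ⟨Sum.map u₁ u₂ (e i), hg i⟩) ↔
        ∀ j, SemA A₁ (k₁ j) (M₁ j) u₁ ∨ SemA A₂ (k₂ j) (M₂ j) u₂

theorem aux_decS_dual {lam : Ordinal} {ρ : Cardinal} {r : ℕ} {φ : Formula τ r}
    (h : DecS Ξ lam ρ φ) : DecP Ξ lam ρ (nnfNeg φ) := by
  intro r₁ r₂ e
  obtain ⟨J, hJ, k₁, k₂, M₁, M₂, hgood, hsem⟩ := h r₁ r₂ e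
  refine ⟨J, hJ, k₁, k₂, fun j => (M₁ j).map nnfNeg, fun j => (M₂ j).map nnfNeg,
    fun j => ⟨aux_goodS_nnfNeg (hgood j).1, aux_goodS_nnfNeg (hgood j).2⟩, ?_⟩
  intro A₁ A₂ u₁ u₂ hg
  refine (aux_sat_nnfNeg _ _ _).trans ?_
  rw [hsem A₁ A₂ u₁ u₂ hg, not_exists]
  refine forall_congr' fun j => ?_
  rw [not_and_or, aux_not_semE, aux_not_semE]

theorem aux_decP_dual {lam : Ordinal} {ρ : Cardinal} {r : ℕ} {φ : Formula τ r}
    (h : DecP Ξ lam ρ φ) : DecS Ξ lam ρ (nnfNeg φ) := by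
  intro r₁ r₂ e
  obtain ⟨J, hJ, k₁, k₂, M₁, M₂, hgood, hsem⟩ := h r₁ r₂ e
  refine ⟨J, hJ, k₁, k₂, fun j => (M₁ j).map nnfNeg, fun j => (M₂ j).map nnfNeg,
    fun j => ⟨aux_goodP_nnfNeg (hgood j).1, aux_goodP_nnfNeg (hgood j).2⟩, ?_⟩
  intro A₁ A₂ u₁ u₂ hg
  refine (aux_sat_nnfNeg _ _ _).trans ?_
  rw [hsem A₁ A₂ u₁ u₂ hg, not_forall]
  refine exists_congr fun j => ?_
  rw [not_or, aux_not_semA, aux_not_semA]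

theorem aux_decS_qf {r : ℕ} {φ : Formula τ r} (hq : IsQF φ) (lam : Ordinal)
    (ρ : Cardinal) : DecS Ξ lam ρ φ := by
  intro r₁ r₂ e
  obtain ⟨J, hJ, M₁, M₂, hqf, hsem⟩ := aux_qfdec (aux_isQF_qfTr Ξ hq) r₁ r₂ e
  refine ⟨J, hJ, fun _ => 0, fun _ => 0, M₁, M₂, ?_, ?_⟩
  · intro j
    constructor
    · exact ⟨by simp, fun δ hδ => ⟨Or.inl ((hqf j).1 δ hδ),
        by rw [aux_rank_qf ((hqf j).1 δ hδ)]; simp⟩⟩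
    · exact ⟨by simp, fun δ hδ => ⟨Or.inl ((hqf j).2 δ hδ),
        by rw [aux_rank_qf ((hqf j).2 δ hδ)]; simp⟩⟩
  · intro A₁ A₂ u₁ u₂ hg
    refine Iff.trans (aux_sat_qfTr Ξ _ hq _) (Iff.trans (hsem A₁ A₂ u₁ u₂)
      (exists_congr fun j => and_congr aux_semE_zero.symm aux_semE_zero.symm))

end Aux5


section Aux6
variable {τ : Vocab}

theorem aux_satL_map_relabel {A : Struc τ} {a b : ℕ} (g : Fin a → Fin b)
    (L : List (Formula τ a)) (w : Fin b → A.carrier) :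
    SatL A (L.map (relabel g)) w ↔ SatL A L (fun i => w (g i)) := by
  constructor
  · intro h δ hδ
    have := h (relabel g δ) (List.mem_map_of_mem hδ)
    rwa [aux_sat_relabel] at this
  · intro h δ' hδ'
    obtain ⟨δ, hδ, rfl⟩ := List.mem_map.mp hδ'
    rw [aux_sat_relabel]
    exact h δ hδ

theorem aux_satL_append {A : Struc τ} {a : ℕ} (L₁ L₂ : List (Formula τ a))
    (w : Fin a → A.carrier) :
    SatL A (L₁ ++ L₂) w ↔ SatL A L₁ w ∧ SatL A L₂ w := by
  simp only [SatL, List.mem_append, or_imp, forall_and]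

theorem aux_lowS_relabel {lam : Ordinal} {a b : ℕ} (g : Fin a → Fin b)
    {δ : Formula τ a} (h : LowS lam δ) : LowS lam (relabel g δ) := by
  rcases h with hq | ⟨μ, hμ, hp⟩
  · exact Or.inl (aux_isQF_relabel g hq)
  · exact Or.inr ⟨μ, hμ, aux_tpi_relabel hp g⟩

variable (Ξ : QFInterp (annotV τ) τ)

theorem aux_conjStep {I : Type} (hI : Finite I) {lam : Ordinal} (lam' : I → Ordinal)
    (hlt : ∀ i, lam' i < lam) {r : ℕ} (f : I → Formula τ r) (ρ' : I → Cardinal)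
    (ρ : Cardinal) (hρ : ∀ i, ρ' i ≤ ρ)
    (hdec : ∀ i, DecP Ξ (lam' i) (ρ' i) (f i)) :
    DecS Ξ lam ρ (Formula.iAnd I f) := by
  intro r₁ r₂ e
  haveI := hI
  haveI := Fintype.ofFinite I
  choose J hJ k₁ k₂ M₁ M₂ hgood hsem using fun i => hdec i r₁ r₂ e
  haveI : ∀ i, Finite (J i) := hJ
  haveI : ∀ i, Fintype (J i) := fun i => Fintype.ofFinite (J i)
  classical
  set F₁ : (∀ i, J i → Bool) → List (Formula τ r₁) := fun c =>
    (Finset.univ : Finset I).toList.flatMap (fun i =>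
      (Finset.univ : Finset (J i)).toList.filterMap (fun j =>
        if c i j then some (sideA (k₁ i j) (M₁ i j)) else none)) with hF₁def
  set F₂ : (∀ i, J i → Bool) → List (Formula τ r₂) := fun c =>
    (Finset.univ : Finset I).toList.flatMap (fun i =>
      (Finset.univ : Finset (J i)).toList.filterMap (fun j =>
        if c i j then none else some (sideA (k₂ i j) (M₂ i j)))) with hF₂def
  have hmem₁ : ∀ c δ, δ ∈ F₁ c ↔
      ∃ i j, c i j = true ∧ δ = sideA (k₁ i j) (M₁ i j) := by
    intro c δ
    constructor
    · intro hδ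
      obtain ⟨i, hi, hδ⟩ := List.mem_flatMap.mp hδ
      obtain ⟨j, hj, hδ⟩ := List.mem_filterMap.mp hδ
      by_cases hc : c i j = true
      · rw [if_pos hc] at hδ
        exact ⟨i, j, hc, (Option.some.inj hδ).symm⟩
      · rw [if_neg hc] at hδ
        cases hδ
    · rintro ⟨i, j, hc, rfl⟩
      refine List.mem_flatMap.mpr ⟨i, Finset.mem_toList.mpr (Finset.mem_univ i), ?_⟩
      exact List.mem_filterMap.mpr
        ⟨j, Finset.mem_toList.mpr (Finset.mem_univ j), by rw [if_pos hc]⟩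
  have hmem₂ : ∀ c δ, δ ∈ F₂ c ↔
      ∃ i j, c i j = false ∧ δ = sideA (k₂ i j) (M₂ i j) := by
    intro c δ
    constructor
    · intro hδ
      obtain ⟨i, hi, hδ⟩ := List.mem_flatMap.mp hδ
      obtain ⟨j, hj, hδ⟩ := List.mem_filterMap.mp hδ
      by_cases hc : c i j = true
      · rw [if_pos hc] at hδ
        cases hδ
      · rw [if_neg hc] at hδ
        exact ⟨i, j, by simpa using hc, (Option.some.inj hδ).symm⟩
    · rintro ⟨i, j, hc, rfl⟩
      refine List.mem_flatMap.mpr ⟨i, Finset.mem_toList.mpr (Finset.mem_univ i), ?_⟩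
      exact List.mem_filterMap.mpr
        ⟨j, Finset.mem_toList.mpr (Finset.mem_univ j), by rw [if_neg (by simp [hc])]⟩
  refine ⟨∀ i, J i → Bool, inferInstance, fun _ => 0, fun _ => 0, F₁, F₂, ?_, ?_⟩
  · intro c
    constructor
    · refine ⟨by simp, ?_⟩
      intro δ hδ
      obtain ⟨i, j, hc, rfl⟩ := (hmem₁ c δ).mp hδ
      obtain ⟨hpi, hrank⟩ := aux_sideA_class (hgood i j).1
      exact ⟨Or.inr ⟨lam' i, hlt i, hpi⟩,
        by rw [Nat.cast_zero, zero_add]; exact hrank.trans (hρ i)⟩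
    · refine ⟨by simp, ?_⟩
      intro δ hδ
      obtain ⟨i, j, hc, rfl⟩ := (hmem₂ c δ).mp hδ
      obtain ⟨hpi, hrank⟩ := aux_sideA_class (hgood i j).2
      exact ⟨Or.inr ⟨lam' i, hlt i, hpi⟩,
        by rw [Nat.cast_zero, zero_add]; exact hrank.trans (hρ i)⟩
  · intro A₁ A₂ u₁ u₂ hg
    have hiff : ∀ i, Sat (Ξ.app (adu A₁ A₂)) (f i)
        (fun i' => ⟨Sum.map u₁ u₂ (e i'), hg i'⟩) ↔
        ∀ j, SemA A₁ (k₁ i j) (M₁ i j) u₁ ∨ SemA A₂ (k₂ i j) (M₂ i j) u₂ :=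
      fun i => hsem i A₁ A₂ u₁ u₂ hg
    show (∀ i, Sat (Ξ.app (adu A₁ A₂)) (f i) _) ↔ _
    constructor
    · intro hall
      refine ⟨fun i j => decide (SemA A₁ (k₁ i j) (M₁ i j) u₁), ?_, ?_⟩
      · rw [aux_semE_zero]
        intro δ hδ
        obtain ⟨i, j, hc, rfl⟩ := (hmem₁ _ δ).mp hδ
        rw [aux_sat_sideA]
        exact of_decide_eq_true hc
      · rw [aux_semE_zero]
        intro δ hδ
        obtain ⟨i, j, hc, rfl⟩ := (hmem₂ _ δ).mp hδ
        rw [aux_sat_sideA]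
        rcases (hiff i).mp (hall i) j with hP | hQ
        · exact absurd (decide_eq_true hP) (by simp [hc])
        · exact hQ
    · rintro ⟨c, hs1, hs2⟩ i
      rw [hiff i]
      intro j
      rcases hcv : c i j with _ | _
      · right
        have := (aux_semE_zero.mp hs2) (sideA (k₂ i j) (M₂ i j))
          ((hmem₂ c _).mpr ⟨i, j, hcv, rfl⟩)
        rwa [aux_sat_sideA] at this
      · left
        have := (aux_semE_zero.mp hs1) (sideA (k₁ i j) (M₁ i j))
          ((hmem₁ c _).mpr ⟨i, j, hcv, rfl⟩)
        rwa [aux_sat_sideA] at this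

end Aux6


section Aux6b
variable {τ : Vocab} (Ξ : QFInterp (annotV τ) τ)

theorem aux_exStep {lam : Ordinal} {ρ : Cardinal} {r : ℕ} {φ : Formula τ (r+1)}
    (h : DecS Ξ lam ρ φ) : DecS Ξ lam (ρ+1) (Formula.ex φ) := by
  intro r₁ r₂ e
  obtain ⟨GJ, hGJ, G₁, G₂, hGqf, hGsem⟩ :=
    aux_qfdec (Ξ.hU) (r₁+1) r₂ (fun _ => Sum.inl (Fin.last r₁))
  obtain ⟨HJ, hHJ, H₁, H₂, hHqf, hHsem⟩ :=
    aux_qfdec (Ξ.hU) r₁ (r₂+1) (fun _ => Sum.inr (Fin.last r₂))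
  set eL : Fin (r+1) → Fin (r₁+1) ⊕ Fin r₂ :=
    Fin.snoc (fun i => Sum.map Fin.castSucc id (e i)) (Sum.inl (Fin.last r₁)) with heL
  set eR : Fin (r+1) → Fin r₁ ⊕ Fin (r₂+1) :=
    Fin.snoc (fun i => Sum.map id Fin.castSucc (e i)) (Sum.inr (Fin.last r₂)) with heR
  obtain ⟨JL, hJL, kL₁, kL₂, ML₁, ML₂, hLgood, hLsem⟩ := h (r₁+1) r₂ eL
  obtain ⟨JR, hJR, kR₁, kR₂, MR₁, MR₂, hRgood, hRsem⟩ := h r₁ (r₂+1) eR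
  refine ⟨(GJ × JL) ⊕ (HJ × JR), inferInstance,
    (fun j => match j with | .inl (_, jl) => kL₁ jl + 1 | .inr (_, jr) => kR₁ jr),
    (fun j => match j with | .inl (_, jl) => kL₂ jl | .inr (_, jr) => kR₂ jr + 1),
    (fun j => match j with
      | .inl (g, jl) =>
          (ML₁ jl).map (relabel (Fin.cast
              (show (r₁+1) + kL₁ jl = r₁ + (kL₁ jl + 1) by omega)))
            ++ (G₁ g).map (relabel (Fin.castLE
              (show r₁+1 ≤ r₁ + (kL₁ jl + 1) by omega)))
      | .inr (hh, jr) =>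
          MR₁ jr ++ (H₁ hh).map (relabel (Fin.castLE (Nat.le_add_right r₁ (kR₁ jr))))),
    (fun j => match j with
      | .inl (g, jl) =>
          ML₂ jl ++ (G₂ g).map (relabel (Fin.castLE (Nat.le_add_right r₂ (kL₂ jl))))
      | .inr (hh, jr) =>
          (MR₂ jr).map (relabel (Fin.cast
              (show (r₂+1) + kR₂ jr = r₂ + (kR₂ jr + 1) by omega)))
            ++ (H₂ hh).map (relabel (Fin.castLE
              (show r₂+1 ≤ r₂ + (kR₂ jr + 1) by omega)))),
    ?_, ?_⟩
  · -- goodness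
    rintro (⟨g, jl⟩ | ⟨hh, jr⟩)
    · constructor
      · refine ⟨?_, ?_⟩
        · push_cast
          exact add_le_add_left (hLgood jl).1.1 1
        · intro δ' hδ'
          rcases List.mem_append.mp hδ' with hδ' | hδ'
          · obtain ⟨δ, hδ, rfl⟩ := List.mem_map.mp hδ'
            refine ⟨aux_lowS_relabel _ ((hLgood jl).1.2 δ hδ).1, ?_⟩
            rw [aux_rank_relabel]
            have harith : ((kL₁ jl + 1 : ℕ) : Cardinal) + rank δ
                = ((kL₁ jl : ℕ) + rank δ) + 1 := by push_cast; ring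
            rw [harith]
            exact add_le_add_left ((hLgood jl).1.2 δ hδ).2 1
          · obtain ⟨γ, hγ, rfl⟩ := List.mem_map.mp hδ'
            refine ⟨Or.inl (aux_isQF_relabel _ ((hGqf g).1 γ hγ)), ?_⟩
            rw [aux_rank_relabel, aux_rank_qf ((hGqf g).1 γ hγ), add_zero]
            push_cast
            exact add_le_add_left (hLgood jl).1.1 1
      · refine ⟨(hLgood jl).2.1.trans (self_le_add_right ρ 1), ?_⟩
        intro δ' hδ'
        rcases List.mem_append.mp hδ' with hδ' | hδ'
        · exact ⟨((hLgood jl).2.2 δ' hδ').1,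
            (((hLgood jl).2.2 δ' hδ').2).trans (self_le_add_right ρ 1)⟩
        · obtain ⟨γ, hγ, rfl⟩ := List.mem_map.mp hδ'
          refine ⟨Or.inl (aux_isQF_relabel _ ((hGqf g).2 γ hγ)), ?_⟩
          rw [aux_rank_relabel, aux_rank_qf ((hGqf g).2 γ hγ), add_zero]
          exact ((hLgood jl).2.1).trans (self_le_add_right ρ 1)
    · constructor
      · refine ⟨(hRgood jr).1.1.trans (self_le_add_right ρ 1), ?_⟩
        intro δ' hδ'
        rcases List.mem_append.mp hδ' with hδ' | hδ'
        · exact ⟨((hRgood jr).1.2 δ' hδ').1,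
            (((hRgood jr).1.2 δ' hδ').2).trans (self_le_add_right ρ 1)⟩
        · obtain ⟨γ, hγ, rfl⟩ := List.mem_map.mp hδ'
          refine ⟨Or.inl (aux_isQF_relabel _ ((hHqf hh).1 γ hγ)), ?_⟩
          rw [aux_rank_relabel, aux_rank_qf ((hHqf hh).1 γ hγ), add_zero]
          exact ((hRgood jr).1.1).trans (self_le_add_right ρ 1)
      · refine ⟨?_, ?_⟩
        · push_cast
          exact add_le_add_left (hRgood jr).2.1 1
        · intro δ' hδ'
          rcases List.mem_append.mp hδ' with hδ' | hδ'
          · obtain ⟨δ, hδ, rfl⟩ := List.mem_map.mp hδ'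
            refine ⟨aux_lowS_relabel _ ((hRgood jr).2.2 δ hδ).1, ?_⟩
            rw [aux_rank_relabel]
            have harith : ((kR₂ jr + 1 : ℕ) : Cardinal) + rank δ
                = ((kR₂ jr : ℕ) + rank δ) + 1 := by push_cast; ring
            rw [harith]
            exact add_le_add_left ((hRgood jr).2.2 δ hδ).2 1
          · obtain ⟨γ, hγ, rfl⟩ := List.mem_map.mp hδ'
            refine ⟨Or.inl (aux_isQF_relabel _ ((hHqf hh).2 γ hγ)), ?_⟩
            rw [aux_rank_relabel, aux_rank_qf ((hHqf hh).2 γ hγ), add_zero]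
            push_cast
            exact add_le_add_left (hRgood jr).2.1 1
  · -- semantics
    intro A₁ A₂ u₁ u₂ hg
    -- value computations for the left extension
    have hvLlast : ∀ b₁ : A₁.carrier,
        Sum.map (Fin.snoc u₁ b₁) u₂ (eL (Fin.last r)) = Sum.inl b₁ := by
      intro b₁
      rw [heL, Fin.snoc_last]
      simp [Fin.snoc_last]
    have hvLcast : ∀ (b₁ : A₁.carrier) (i0 : Fin r),
        Sum.map (Fin.snoc u₁ b₁) u₂ (eL (Fin.castSucc i0)) = Sum.map u₁ u₂ (e i0) := by
      intro b₁ i0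
      rw [heL, Fin.snoc_castSucc]
      rcases e i0 with a | b <;> simp [Fin.snoc_castSucc]
    have hvRlast : ∀ b₂ : A₂.carrier,
        Sum.map u₁ (Fin.snoc u₂ b₂) (eR (Fin.last r)) = Sum.inr b₂ := by
      intro b₂
      rw [heR, Fin.snoc_last]
      simp [Fin.snoc_last]
    have hvRcast : ∀ (b₂ : A₂.carrier) (i0 : Fin r),
        Sum.map u₁ (Fin.snoc u₂ b₂) (eR (Fin.castSucc i0)) = Sum.map u₁ u₂ (e i0) := by
      intro b₂ i0
      rw [heR, Fin.snoc_castSucc]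
      rcases e i0 with a | b <;> simp [Fin.snoc_castSucc]
    -- guards for extended patterns
    have hgL : ∀ (b₁ : A₁.carrier),
        Sat (adu A₁ A₂) Ξ.xiU (fun _ : Fin 1 => (Sum.inl b₁ : A₁.carrier ⊕ A₂.carrier)) →
        Guarded Ξ A₁ A₂ eL (Fin.snoc u₁ b₁) u₂ := by
      intro b₁ hb₁ i
      refine Fin.lastCases ?_ (fun i0 => ?_) i
      · rw [hvLlast b₁]; exact hb₁
      · rw [hvLcast b₁ i0]; exact hg i0
    have hgR : ∀ (b₂ : A₂.carrier),
        Sat (adu A₁ A₂) Ξ.xiU (fun _ : Fin 1 => (Sum.inr b₂ : A₁.carrier ⊕ A₂.carrier)) →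
        Guarded Ξ A₁ A₂ eR u₁ (Fin.snoc u₂ b₂) := by
      intro b₂ hb₂ i
      refine Fin.lastCases ?_ (fun i0 => ?_) i
      · rw [hvRlast b₂]; exact hb₂
      · rw [hvRcast b₂ i0]; exact hg i0
    -- assignment equalities
    have hassignL : ∀ (b₁ : A₁.carrier)
        (hb₁ : Sat (adu A₁ A₂) Ξ.xiU (fun _ : Fin 1 => (Sum.inl b₁ : A₁.carrier ⊕ A₂.carrier))),
        (fun i => (⟨Sum.map (Fin.snoc u₁ b₁) u₂ (eL i), hgL b₁ hb₁ i⟩ :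
            (Ξ.app (adu A₁ A₂)).carrier))
          = Fin.snoc (α := fun _ => (Ξ.app (adu A₁ A₂)).carrier)
              (fun i => ⟨Sum.map u₁ u₂ (e i), hg i⟩) ⟨Sum.inl b₁, hb₁⟩ := by
      intro b₁ hb₁
      funext i
      refine Fin.lastCases ?_ (fun i0 => ?_) i
      · refine Eq.trans ?_ (Fin.snoc_last (α := fun _ => (Ξ.app (adu A₁ A₂)).carrier) (⟨Sum.inl b₁, hb₁⟩ : (Ξ.app (adu A₁ A₂)).carrier) (fun i => ⟨Sum.map u₁ u₂ (e i), hg i⟩)).symm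
        exact Subtype.ext (hvLlast b₁)
      · refine Eq.trans ?_ (Fin.snoc_castSucc (α := fun _ => (Ξ.app (adu A₁ A₂)).carrier) (⟨Sum.inl b₁, hb₁⟩ : (Ξ.app (adu A₁ A₂)).carrier) (fun i => ⟨Sum.map u₁ u₂ (e i), hg i⟩) i0).symm
        exact Subtype.ext (hvLcast b₁ i0)
    have hassignR : ∀ (b₂ : A₂.carrier)
        (hb₂ : Sat (adu A₁ A₂) Ξ.xiU (fun _ : Fin 1 => (Sum.inr b₂ : A₁.carrier ⊕ A₂.carrier))),
        (fun i => (⟨Sum.map u₁ (Fin.snoc u₂ b₂) (eR i), hgR b₂ hb₂ i⟩ :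
            (Ξ.app (adu A₁ A₂)).carrier))
          = Fin.snoc (α := fun _ => (Ξ.app (adu A₁ A₂)).carrier)
              (fun i => ⟨Sum.map u₁ u₂ (e i), hg i⟩) ⟨Sum.inr b₂, hb₂⟩ := by
      intro b₂ hb₂
      funext i
      refine Fin.lastCases ?_ (fun i0 => ?_) i
      · refine Eq.trans ?_ (Fin.snoc_last (α := fun _ => (Ξ.app (adu A₁ A₂)).carrier) (⟨Sum.inr b₂, hb₂⟩ : (Ξ.app (adu A₁ A₂)).carrier) (fun i => ⟨Sum.map u₁ u₂ (e i), hg i⟩)).symm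
        exact Subtype.ext (hvRlast b₂)
      · refine Eq.trans ?_ (Fin.snoc_castSucc (α := fun _ => (Ξ.app (adu A₁ A₂)).carrier) (⟨Sum.inr b₂, hb₂⟩ : (Ξ.app (adu A₁ A₂)).carrier) (fun i => ⟨Sum.map u₁ u₂ (e i), hg i⟩) i0).symm
        exact Subtype.ext (hvRcast b₂ i0)
    -- guard decompositions at concrete witnesses
    have hguardL : ∀ b₁ : A₁.carrier,
        Sat (adu A₁ A₂) Ξ.xiU (fun _ : Fin 1 => (Sum.inl b₁ : A₁.carrier ⊕ A₂.carrier)) ↔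
        ∃ g, SatL A₁ (G₁ g) (Fin.snoc u₁ b₁) ∧ SatL A₂ (G₂ g) u₂ := by
      intro b₁
      have hfe : (fun i : Fin 1 => Sum.map (Fin.snoc u₁ b₁) u₂
          ((fun _ : Fin 1 => (Sum.inl (Fin.last r₁) : Fin (r₁+1) ⊕ Fin r₂)) i))
          = fun _ : Fin 1 => (Sum.inl b₁ : A₁.carrier ⊕ A₂.carrier) := by
        funext i
        simp [Fin.snoc_last]
      have := hGsem A₁ A₂ (Fin.snoc u₁ b₁) u₂
      rwa [hfe] at this
    have hguardR : ∀ b₂ : A₂.carrier,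
        Sat (adu A₁ A₂) Ξ.xiU (fun _ : Fin 1 => (Sum.inr b₂ : A₁.carrier ⊕ A₂.carrier)) ↔
        ∃ hh, SatL A₁ (H₁ hh) u₁ ∧ SatL A₂ (H₂ hh) (Fin.snoc u₂ b₂) := by
      intro b₂
      have hfe : (fun i : Fin 1 => Sum.map u₁ (Fin.snoc u₂ b₂)
          ((fun _ : Fin 1 => (Sum.inr (Fin.last r₂) : Fin r₁ ⊕ Fin (r₂+1))) i))
          = fun _ : Fin 1 => (Sum.inr b₂ : A₁.carrier ⊕ A₂.carrier) := by
        funext i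
        simp [Fin.snoc_last]
      have := hHsem A₁ A₂ u₁ (Fin.snoc u₂ b₂)
      rwa [hfe] at this
    -- clause equivalences, left
    have hclauseL : ∀ (g : GJ) (jl : JL),
        SemE A₁ (kL₁ jl + 1)
          ((ML₁ jl).map (relabel (Fin.cast (by omega)))
            ++ (G₁ g).map (relabel (Fin.castLE (by omega)))) u₁
        ↔ ∃ b₁, SatL A₁ (G₁ g) (Fin.snoc u₁ b₁) ∧
            SemE A₁ (kL₁ jl) (ML₁ jl) (Fin.snoc u₁ b₁) := by
      intro g jl
      constructor
      · rintro ⟨c, hc⟩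
        set b₁ := c ⟨0, Nat.succ_pos _⟩ with hb₁def
        set bb : Fin (kL₁ jl) → A₁.carrier :=
          fun t => c ⟨t.val + 1, by have := t.isLt; omega⟩ with hbbdef
        have hcc : consF b₁ bb = c := aux_consF_eta c
        rw [← hcc] at hc
        rw [aux_satL_append] at hc
        refine ⟨b₁, ?_, ⟨bb, ?_⟩⟩
        · intro γ hγ
          have := hc.2 (relabel (Fin.castLE (by omega)) γ) (List.mem_map_of_mem hγ)
          rw [aux_sat_relabel] at this
          rwa [show (fun i => Fin.append u₁ (consF b₁ bb) (Fin.castLE (by omega) i))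
            = Fin.snoc u₁ b₁ from funext fun i => aux_key2 u₁ b₁ bb i] at this
        · intro δ hδ
          have := hc.1 (relabel (Fin.cast (by omega)) δ) (List.mem_map_of_mem hδ)
          rw [aux_sat_relabel] at this
          rwa [show (fun i => Fin.append u₁ (consF b₁ bb) (Fin.cast (by omega) i))
            = Fin.append (Fin.snoc u₁ b₁) bb from funext fun i => aux_key1 u₁ b₁ bb i] at this
      · rintro ⟨b₁, hG, c0, hM⟩
        refine ⟨consF b₁ c0, ?_⟩
        rw [aux_satL_append]
        constructor
        · rw [aux_satL_map_relabel]
          rwa [show (fun i => Fin.append u₁ (consF b₁ c0) (Fin.cast (by omega) i))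
            = Fin.append (Fin.snoc u₁ b₁) c0 from funext fun i => aux_key1 u₁ b₁ c0 i]
        · rw [aux_satL_map_relabel]
          rwa [show (fun i => Fin.append u₁ (consF b₁ c0) (Fin.castLE (by omega) i))
            = Fin.snoc u₁ b₁ from funext fun i => aux_key2 u₁ b₁ c0 i]
    have hclauseL2 : ∀ (g : GJ) (jl : JL),
        SemE A₂ (kL₂ jl)
          (ML₂ jl ++ (G₂ g).map (relabel (Fin.castLE (Nat.le_add_right r₂ (kL₂ jl))))) u₂
        ↔ SatL A₂ (G₂ g) u₂ ∧ SemE A₂ (kL₂ jl) (ML₂ jl) u₂ := by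
      intro g jl
      constructor
      · rintro ⟨c, hc⟩
        rw [aux_satL_append] at hc
        refine ⟨?_, ⟨c, hc.1⟩⟩
        have := (aux_satL_map_relabel _ _ _).mp hc.2
        rwa [show (fun i => Fin.append u₂ c (Fin.castLE (Nat.le_add_right r₂ (kL₂ jl)) i))
          = u₂ from funext fun i => aux_key3 u₂ c i] at this
      · rintro ⟨hG, c, hM⟩
        refine ⟨c, ?_⟩
        rw [aux_satL_append]
        refine ⟨hM, ?_⟩
        rw [aux_satL_map_relabel]
        rwa [show (fun i => Fin.append u₂ c (Fin.castLE (Nat.le_add_right r₂ (kL₂ jl)) i))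
          = u₂ from funext fun i => aux_key3 u₂ c i]
    -- clause equivalences, right
    have hclauseR1 : ∀ (hh : HJ) (jr : JR),
        SemE A₁ (kR₁ jr)
          (MR₁ jr ++ (H₁ hh).map (relabel (Fin.castLE (Nat.le_add_right r₁ (kR₁ jr))))) u₁
        ↔ SatL A₁ (H₁ hh) u₁ ∧ SemE A₁ (kR₁ jr) (MR₁ jr) u₁ := by
      intro hh jr
      constructor
      · rintro ⟨c, hc⟩
        rw [aux_satL_append] at hc
        refine ⟨?_, ⟨c, hc.1⟩⟩
        have := (aux_satL_map_relabel _ _ _).mp hc.2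
        rwa [show (fun i => Fin.append u₁ c (Fin.castLE (Nat.le_add_right r₁ (kR₁ jr)) i))
          = u₁ from funext fun i => aux_key3 u₁ c i] at this
      · rintro ⟨hG, c, hM⟩
        refine ⟨c, ?_⟩
        rw [aux_satL_append]
        refine ⟨hM, ?_⟩
        rw [aux_satL_map_relabel]
        rwa [show (fun i => Fin.append u₁ c (Fin.castLE (Nat.le_add_right r₁ (kR₁ jr)) i))
          = u₁ from funext fun i => aux_key3 u₁ c i]
    have hclauseR2 : ∀ (hh : HJ) (jr : JR),
        SemE A₂ (kR₂ jr + 1)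
          ((MR₂ jr).map (relabel (Fin.cast (by omega)))
            ++ (H₂ hh).map (relabel (Fin.castLE (by omega)))) u₂
        ↔ ∃ b₂, SatL A₂ (H₂ hh) (Fin.snoc u₂ b₂) ∧
            SemE A₂ (kR₂ jr) (MR₂ jr) (Fin.snoc u₂ b₂) := by
      intro hh jr
      constructor
      · rintro ⟨c, hc⟩
        set b₂ := c ⟨0, Nat.succ_pos _⟩ with hb₂def
        set bb : Fin (kR₂ jr) → A₂.carrier :=
          fun t => c ⟨t.val + 1, by have := t.isLt; omega⟩ with hbbdef
        have hcc : consF b₂ bb = c := aux_consF_eta c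
        rw [← hcc] at hc
        rw [aux_satL_append] at hc
        refine ⟨b₂, ?_, ⟨bb, ?_⟩⟩
        · intro γ hγ
          have := hc.2 (relabel (Fin.castLE (by omega)) γ) (List.mem_map_of_mem hγ)
          rw [aux_sat_relabel] at this
          rwa [show (fun i => Fin.append u₂ (consF b₂ bb) (Fin.castLE (by omega) i))
            = Fin.snoc u₂ b₂ from funext fun i => aux_key2 u₂ b₂ bb i] at this
        · intro δ hδ
          have := hc.1 (relabel (Fin.cast (by omega)) δ) (List.mem_map_of_mem hδ)
          rw [aux_sat_relabel] at this
          rwa [show (fun i => Fin.append u₂ (consF b₂ bb) (Fin.cast (by omega) i))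
            = Fin.append (Fin.snoc u₂ b₂) bb from funext fun i => aux_key1 u₂ b₂ bb i] at this
      · rintro ⟨b₂, hG, c0, hM⟩
        refine ⟨consF b₂ c0, ?_⟩
        rw [aux_satL_append]
        constructor
        · rw [aux_satL_map_relabel]
          rwa [show (fun i => Fin.append u₂ (consF b₂ c0) (Fin.cast (by omega) i))
            = Fin.append (Fin.snoc u₂ b₂) c0 from funext fun i => aux_key1 u₂ b₂ c0 i]
        · rw [aux_satL_map_relabel]
          rwa [show (fun i => Fin.append u₂ (consF b₂ c0) (Fin.castLE (by omega) i))
            = Fin.snoc u₂ b₂ from funext fun i => aux_key2 u₂ b₂ c0 i]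
    -- main equivalence
    show (∃ a : (Ξ.app (adu A₁ A₂)).carrier,
        Sat (Ξ.app (adu A₁ A₂)) φ (Fin.snoc (fun i => ⟨Sum.map u₁ u₂ (e i), hg i⟩) a)) ↔ _
    constructor
    · rintro ⟨⟨x, hx⟩, hsat⟩
      rcases x with b₁ | b₂
      · obtain ⟨g, hgG1, hgG2⟩ := (hguardL b₁).mp hx
        have hsat' : Sat (Ξ.app (adu A₁ A₂)) φ
            (fun i => ⟨Sum.map (Fin.snoc u₁ b₁) u₂ (eL i), hgL b₁ hx i⟩) := by
          rw [hassignL b₁ hx]; exact hsat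
        obtain ⟨jl, hj1, hj2⟩ := (hLsem A₁ A₂ (Fin.snoc u₁ b₁) u₂ (hgL b₁ hx)).mp hsat'
        exact ⟨Sum.inl (g, jl), (hclauseL g jl).mpr ⟨b₁, hgG1, hj1⟩,
          (hclauseL2 g jl).mpr ⟨hgG2, hj2⟩⟩
      · obtain ⟨hh, hhH1, hhH2⟩ := (hguardR b₂).mp hx
        have hsat' : Sat (Ξ.app (adu A₁ A₂)) φ
            (fun i => ⟨Sum.map u₁ (Fin.snoc u₂ b₂) (eR i), hgR b₂ hx i⟩) := by
          rw [hassignR b₂ hx]; exact hsat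
        obtain ⟨jr, hj1, hj2⟩ := (hRsem A₁ A₂ u₁ (Fin.snoc u₂ b₂) (hgR b₂ hx)).mp hsat'
        exact ⟨Sum.inr (hh, jr), (hclauseR1 hh jr).mpr ⟨hhH1, hj1⟩,
          (hclauseR2 hh jr).mpr ⟨b₂, hhH2, hj2⟩⟩
    · rintro ⟨j, hj1, hj2⟩
      rcases j with ⟨g, jl⟩ | ⟨hh, jr⟩
      · obtain ⟨b₁, hG1, hM1⟩ := (hclauseL g jl).mp hj1
        obtain ⟨hG2, hM2⟩ := (hclauseL2 g jl).mp hj2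
        have hb₁ := (hguardL b₁).mpr ⟨g, hG1, hG2⟩
        refine ⟨⟨Sum.inl b₁, hb₁⟩, ?_⟩
        rw [← hassignL b₁ hb₁]
        exact (hLsem A₁ A₂ (Fin.snoc u₁ b₁) u₂ (hgL b₁ hb₁)).mpr ⟨jl, hM1, hM2⟩
      · obtain ⟨hH1, hM1⟩ := (hclauseR1 hh jr).mp hj1
        obtain ⟨b₂, hH2, hM2⟩ := (hclauseR2 hh jr).mp hj2
        have hb₂ := (hguardR b₂).mpr ⟨hh, hH1, hH2⟩
        refine ⟨⟨Sum.inr b₂, hb₂⟩, ?_⟩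
        rw [← hassignR b₂ hb₂]
        exact (hRsem A₁ A₂ u₁ (Fin.snoc u₂ b₂) (hgR b₂ hb₂)).mpr ⟨jr, hM1, hM2⟩

end Aux6b


section Aux7
variable {τ : Vocab} (Ξ : QFInterp (annotV τ) τ)

theorem aux_mainS {lam : Ordinal} {r : ℕ} {φ : Formula τ r}
    (h : TSigma τ ℵ₀ lam φ) : DecS Ξ lam (rank φ) φ := by
  refine TSigma.rec (κ := ℵ₀) (τ := τ)
    (motive_1 := fun lam {r} φ _ => DecS Ξ lam (rank φ) φ)
    (motive_2 := fun lam {r} φ _ => DecP Ξ lam (rank φ) φ)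
    ?_ ?_ ?_ ?_ ?_ ?_ h
  · intro n φ hq
    exact aux_decS_qf Ξ hq 0 (rank φ)
  · intro n lam I f hI lam' hlt hp ih
    refine aux_conjStep Ξ (Cardinal.lt_aleph0_iff_finite.mp hI) lam' hlt f
      (fun i => rank (f i)) (rank (Formula.iAnd I f)) ?_ ih
    intro i
    exact le_ciSup (Cardinal.bddAbove_range _) i
  · intro n lam φ hs ih
    exact aux_exStep Ξ ih
  · intro n φ hq
    have h1 := aux_decS_dual Ξ (aux_decS_qf Ξ (aux_isQF_nnfNeg hq) 0 (rank φ))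
    rw [aux_nnfNeg_nnfNeg] at h1
    exact h1
  · intro n lam I f hI lam' hlt hs ih
    have hstep := aux_conjStep Ξ (Cardinal.lt_aleph0_iff_finite.mp hI) lam' hlt
      (fun i => nnfNeg (f i)) (fun i => rank (f i)) (rank (Formula.iOr I f))
      (fun i => le_ciSup (Cardinal.bddAbove_range _) i)
      (fun i => aux_decS_dual Ξ (ih i))
    have hd := aux_decS_dual Ξ hstep
    rw [show nnfNeg (Formula.iAnd I fun i => nnfNeg (f i)) = Formula.iOr I f from by
      show Formula.iOr I (fun i => nnfNeg (nnfNeg (f i))) = _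
      rw [show (fun i => nnfNeg (nnfNeg (f i))) = f from
        funext fun i => aux_nnfNeg_nnfNeg (f i)]] at hd
    exact hd
  · intro n lam φ hp ih
    have h1 := aux_exStep Ξ (aux_decP_dual Ξ ih)
    have h2 := aux_decS_dual Ξ h1
    rw [show nnfNeg (Formula.ex (nnfNeg φ)) = Formula.all φ from by
      show Formula.all (nnfNeg (nnfNeg φ)) = _
      rw [aux_nnfNeg_nnfNeg]] at h2
    exact h2

theorem aux_mainP {lam : Ordinal} {r : ℕ} {φ : Formula τ r}
    (h : TPi τ ℵ₀ lam φ) : DecP Ξ lam (rank φ) φ := by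
  refine TPi.rec (κ := ℵ₀) (τ := τ)
    (motive_1 := fun lam {r} φ _ => DecS Ξ lam (rank φ) φ)
    (motive_2 := fun lam {r} φ _ => DecP Ξ lam (rank φ) φ)
    ?_ ?_ ?_ ?_ ?_ ?_ h
  · intro n φ hq
    exact aux_decS_qf Ξ hq 0 (rank φ)
  · intro n lam I f hI lam' hlt hp ih
    refine aux_conjStep Ξ (Cardinal.lt_aleph0_iff_finite.mp hI) lam' hlt f
      (fun i => rank (f i)) (rank (Formula.iAnd I f)) ?_ ih
    intro i
    exact le_ciSup (Cardinal.bddAbove_range _) i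
  · intro n lam φ hs ih
    exact aux_exStep Ξ ih
  · intro n φ hq
    have h1 := aux_decS_dual Ξ (aux_decS_qf Ξ (aux_isQF_nnfNeg hq) 0 (rank φ))
    rw [aux_nnfNeg_nnfNeg] at h1
    exact h1
  · intro n lam I f hI lam' hlt hs ih
    have hstep := aux_conjStep Ξ (Cardinal.lt_aleph0_iff_finite.mp hI) lam' hlt
      (fun i => nnfNeg (f i)) (fun i => rank (f i)) (rank (Formula.iOr I f))
      (fun i => le_ciSup (Cardinal.bddAbove_range _) i)
      (fun i => aux_decS_dual Ξ (ih i))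
    have hd := aux_decS_dual Ξ hstep
    rw [show nnfNeg (Formula.iAnd I fun i => nnfNeg (f i)) = Formula.iOr I f from by
      show Formula.iOr I (fun i => nnfNeg (nnfNeg (f i))) = _
      rw [show (fun i => nnfNeg (nnfNeg (f i))) = f from
        funext fun i => aux_nnfNeg_nnfNeg (f i)]] at hd
    exact hd
  · intro n lam φ hp ih
    have h1 := aux_exStep Ξ (aux_decP_dual Ξ ih)
    have h2 := aux_decS_dual Ξ h1
    rw [show nnfNeg (Formula.ex (nnfNeg φ)) = Formula.all φ from by
      show Formula.all (nnfNeg (nnfNeg φ)) = _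
      rw [aux_nnfNeg_nnfNeg]] at h2
    exact h2

end Aux7


section Aux8
universe u v
variable {τ : Vocab}

theorem aux_rank_lift : ∀ {r : ℕ} (φ : Formula τ r),
    rank.{u} φ = Cardinal.lift.{u} (rank.{0} φ)
  | _, .tru => by simp [rank]
  | _, .fls => by simp [rank]
  | _, .rel R ts => by simp [rank]
  | _, .nrel R ts => by simp [rank]
  | _, .eq i j => by simp [rank]
  | _, .neq i j => by simp [rank]
  | _, .iAnd I f => by
      show (⨆ i : I, rank.{u} (f i)) = Cardinal.lift.{u} (⨆ i : I, rank.{0} (f i))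
      rw [Cardinal.lift_iSup (Cardinal.bddAbove_range _)]
      exact iSup_congr fun i => aux_rank_lift (f i)
  | _, .iOr I f => by
      show (⨆ i : I, rank.{u} (f i)) = Cardinal.lift.{u} (⨆ i : I, rank.{0} (f i))
      rw [Cardinal.lift_iSup (Cardinal.bddAbove_range _)]
      exact iSup_congr fun i => aux_rank_lift (f i)
  | _, .ex φ => by
      show rank.{u} φ + 1 = Cardinal.lift.{u} (rank.{0} φ + 1)
      rw [Cardinal.lift_add, Cardinal.lift_one, aux_rank_lift φ]
  | _, .all φ => by
      show rank.{u} φ + 1 = Cardinal.lift.{u} (rank.{0} φ + 1)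
      rw [Cardinal.lift_add, Cardinal.lift_one, aux_rank_lift φ]

theorem aux_rank_le_nat {r : ℕ} (ψ : Formula τ r) (m : ℕ) :
    rank.{u} ψ ≤ (m : Cardinal.{u}) ↔ rank.{0} ψ ≤ (m : Cardinal.{0}) := by
  rw [aux_rank_lift.{u} ψ, ← Cardinal.lift_natCast.{u,0} m, Cardinal.lift_le]

theorem aux_tsigma_change {κ : Cardinal} {k : ℕ} {r : ℕ} {φ : Formula τ r}
    (h : TSigma.{u} τ κ (k : Ordinal.{u}) φ) : TSigma.{v} τ κ (k : Ordinal.{v}) φ := by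
  have main : ∀ {lam : Ordinal.{u}} {r : ℕ} {φ : Formula τ r}, TSigma.{u} τ κ lam φ →
      ∀ k : ℕ, lam = (k : Ordinal.{u}) → TSigma.{v} τ κ (k : Ordinal.{v}) φ := by
    intro lam r φ h
    refine TSigma.rec (κ := κ) (τ := τ)
      (motive_1 := fun lam {r} φ _ => ∀ k : ℕ, lam = (k : Ordinal.{u}) →
        TSigma.{v} τ κ (k : Ordinal.{v}) φ)
      (motive_2 := fun lam {r} φ _ => ∀ k : ℕ, lam = (k : Ordinal.{u}) →
        TPi.{v} τ κ (k : Ordinal.{v}) φ)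
      ?_ ?_ ?_ ?_ ?_ ?_ h
    · intro n φ hq k hk
      have hk0 : k = 0 := by exact_mod_cast hk.symm
      subst hk0
      rw [Nat.cast_zero]
      exact TSigma.qf hq
    · intro n lam I f hI lam' hlt hp ih k hk
      subst hk
      have hex : ∀ i, ∃ ki : ℕ, lam' i = (ki : Ordinal.{u}) ∧ ki < k := by
        intro i
        have h1 : lam' i < (k : Ordinal.{u}) := hlt i
        obtain ⟨ki, hki⟩ := Ordinal.lt_omega0.mp (h1.trans (Ordinal.nat_lt_omega0 k))
        refine ⟨ki, hki, ?_⟩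
        rw [hki] at h1
        exact_mod_cast h1
      choose ki hki hkilt using hex
      refine TSigma.conj I f hI (fun i => (ki i : Ordinal.{v})) (fun i => ?_) (fun i => ?_)
      · show ((ki i : ℕ) : Ordinal.{v}) < ((k : ℕ) : Ordinal.{v})
        exact_mod_cast hkilt i
      · exact ih i (ki i) (hki i)
    · intro n lam φ hs ih k hk
      exact TSigma.ex (ih k hk)
    · intro n φ hq k hk
      have hk0 : k = 0 := by exact_mod_cast hk.symm
      subst hk0
      rw [Nat.cast_zero]
      exact TPi.qf hq
    · intro n lam I f hI lam' hlt hp ih k hk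
      subst hk
      have hex : ∀ i, ∃ ki : ℕ, lam' i = (ki : Ordinal.{u}) ∧ ki < k := by
        intro i
        have h1 : lam' i < (k : Ordinal.{u}) := hlt i
        obtain ⟨ki, hki⟩ := Ordinal.lt_omega0.mp (h1.trans (Ordinal.nat_lt_omega0 k))
        refine ⟨ki, hki, ?_⟩
        rw [hki] at h1
        exact_mod_cast h1
      choose ki hki hkilt using hex
      refine TPi.disj I f hI (fun i => (ki i : Ordinal.{v})) (fun i => ?_) (fun i => ?_)
      · show ((ki i : ℕ) : Ordinal.{v}) < ((k : ℕ) : Ordinal.{v})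
        exact_mod_cast hkilt i
      · exact ih i (ki i) (hki i)
    · intro n lam φ hs ih k hk
      exact TPi.all (ih k hk)
  exact main h k rfl

theorem aux_tpi_change {κ : Cardinal} {k : ℕ} {r : ℕ} {φ : Formula τ r}
    (h : TPi.{u} τ κ (k : Ordinal.{u}) φ) : TPi.{v} τ κ (k : Ordinal.{v}) φ := by
  have main : ∀ {lam : Ordinal.{u}} {r : ℕ} {φ : Formula τ r}, TPi.{u} τ κ lam φ →
      ∀ k : ℕ, lam = (k : Ordinal.{u}) → TPi.{v} τ κ (k : Ordinal.{v}) φ := by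
    intro lam r φ h
    refine TPi.rec (κ := κ) (τ := τ)
      (motive_1 := fun lam {r} φ _ => ∀ k : ℕ, lam = (k : Ordinal.{u}) →
        TSigma.{v} τ κ (k : Ordinal.{v}) φ)
      (motive_2 := fun lam {r} φ _ => ∀ k : ℕ, lam = (k : Ordinal.{u}) →
        TPi.{v} τ κ (k : Ordinal.{v}) φ)
      ?_ ?_ ?_ ?_ ?_ ?_ h
    · intro n φ hq k hk
      have hk0 : k = 0 := by exact_mod_cast hk.symm
      subst hk0
      rw [Nat.cast_zero]
      exact TSigma.qf hq
    · intro n lam I f hI lam' hlt hp ih k hk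
      subst hk
      have hex : ∀ i, ∃ ki : ℕ, lam' i = (ki : Ordinal.{u}) ∧ ki < k := by
        intro i
        have h1 : lam' i < (k : Ordinal.{u}) := hlt i
        obtain ⟨ki, hki⟩ := Ordinal.lt_omega0.mp (h1.trans (Ordinal.nat_lt_omega0 k))
        refine ⟨ki, hki, ?_⟩
        rw [hki] at h1
        exact_mod_cast h1
      choose ki hki hkilt using hex
      refine TSigma.conj I f hI (fun i => (ki i : Ordinal.{v})) (fun i => ?_) (fun i => ?_)
      · show ((ki i : ℕ) : Ordinal.{v}) < ((k : ℕ) : Ordinal.{v})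
        exact_mod_cast hkilt i
      · exact ih i (ki i) (hki i)
    · intro n lam φ hs ih k hk
      exact TSigma.ex (ih k hk)
    · intro n φ hq k hk
      have hk0 : k = 0 := by exact_mod_cast hk.symm
      subst hk0
      rw [Nat.cast_zero]
      exact TPi.qf hq
    · intro n lam I f hI lam' hlt hp ih k hk
      subst hk
      have hex : ∀ i, ∃ ki : ℕ, lam' i = (ki : Ordinal.{u}) ∧ ki < k := by
        intro i
        have h1 : lam' i < (k : Ordinal.{u}) := hlt i
        obtain ⟨ki, hki⟩ := Ordinal.lt_omega0.mp (h1.trans (Ordinal.nat_lt_omega0 k))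
        refine ⟨ki, hki, ?_⟩
        rw [hki] at h1
        exact_mod_cast h1
      choose ki hki hkilt using hex
      refine TPi.disj I f hI (fun i => (ki i : Ordinal.{v})) (fun i => ?_) (fun i => ?_)
      · show ((ki i : ℕ) : Ordinal.{v}) < ((k : ℕ) : Ordinal.{v})
        exact_mod_cast hkilt i
      · exact ih i (ki i) (hki i)
    · intro n lam φ hs ih k hk
      exact TPi.all (ih k hk)
  exact main h k rfl

end Aux8


/-- For L one of tΣ_n[m] or tΠ_n[m] over τ and ⊛ a quantifier-free sum-like
binary operation on τ-structures: if A₁, A₁' satisfy the same L sentences and A₂, A₂' satisfy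
the same L sentences, then A₁ ⊛ A₂ and A₁' ⊛ A₂' satisfy the same L sentences. -/
theorem stmt9 (τ : Vocab) [Fintype τ.Rel] (n m : ℕ)
    (Ξ : QFInterp (annotV τ) τ) (A₁ A₁' A₂ A₂' : Struc τ) :
    ((∀ φ : Formula τ 0, TSigma τ ℵ₀ (n : Ordinal) φ → rank φ ≤ (m : Cardinal) →
        (Sat A₁ φ emptyA ↔ Sat A₁' φ emptyA)) →
     (∀ φ : Formula τ 0, TSigma τ ℵ₀ (n : Ordinal) φ → rank φ ≤ (m : Cardinal) →
        (Sat A₂ φ emptyA ↔ Sat A₂' φ emptyA)) →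
     ∀ φ : Formula τ 0, TSigma τ ℵ₀ (n : Ordinal) φ → rank φ ≤ (m : Cardinal) →
        (Sat (sumLike Ξ A₁ A₂) φ emptyA ↔ Sat (sumLike Ξ A₁' A₂') φ emptyA)) ∧
    ((∀ φ : Formula τ 0, TPi τ ℵ₀ (n : Ordinal) φ → rank φ ≤ (m : Cardinal) →
        (Sat A₁ φ emptyA ↔ Sat A₁' φ emptyA)) →
     (∀ φ : Formula τ 0, TPi τ ℵ₀ (n : Ordinal) φ → rank φ ≤ (m : Cardinal) →
        (Sat A₂ φ emptyA ↔ Sat A₂' φ emptyA)) →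
     ∀ φ : Formula τ 0, TPi τ ℵ₀ (n : Ordinal) φ → rank φ ≤ (m : Cardinal) →
        (Sat (sumLike Ξ A₁ A₂) φ emptyA ↔ Sat (sumLike Ξ A₁' A₂') φ emptyA)) := by
  constructor
  · -- Σ case
    intro H1 H2 φ hφ hrank
    have hφ0 : TSigma.{0} τ ℵ₀ ((n : ℕ) : Ordinal.{0}) φ := aux_tsigma_change hφ
    have hrank0 : rank.{0} φ ≤ (m : Cardinal.{0}) := (aux_rank_le_nat φ m).mp hrank
    obtain ⟨J, hJ, k₁, k₂, M₁, M₂, hgood, hsem⟩ := aux_mainS Ξ hφ0 0 0 Fin.elim0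
    have key : ∀ (B₁ B₂ : Struc τ), Sat (sumLike Ξ B₁ B₂) φ emptyA ↔
        ∃ j, SemE B₁ (k₁ j) (M₁ j) emptyA ∧ SemE B₂ (k₂ j) (M₂ j) emptyA := by
      intro B₁ B₂
      have hguard : Guarded Ξ B₁ B₂ Fin.elim0 emptyA emptyA := fun i => i.elim0
      have h2 := hsem B₁ B₂ emptyA emptyA hguard
      rw [show (fun i : Fin 0 => (⟨Sum.map emptyA emptyA (Fin.elim0 i), hguard i⟩ :
        (Ξ.app (adu B₁ B₂)).carrier)) = emptyA from funext fun i => i.elim0] at h2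
      exact h2
    rw [key A₁ A₂, key A₁' A₂']
    refine exists_congr fun j => ?_
    have hs1 : SemE A₁ (k₁ j) (M₁ j) emptyA ↔ SemE A₁' (k₁ j) (M₁ j) emptyA := by
      rw [← aux_sat_sideE, ← aux_sat_sideE]
      exact H1 (sideE (k₁ j) (M₁ j)) (aux_tsigma_change (aux_sideE_class (hgood j).1).1)
        ((aux_rank_le_nat _ m).mpr (((aux_sideE_class (hgood j).1).2).trans hrank0))
    have hs2 : SemE A₂ (k₂ j) (M₂ j) emptyA ↔ SemE A₂' (k₂ j) (M₂ j) emptyA := by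
      rw [← aux_sat_sideE, ← aux_sat_sideE]
      exact H2 (sideE (k₂ j) (M₂ j)) (aux_tsigma_change (aux_sideE_class (hgood j).2).1)
        ((aux_rank_le_nat _ m).mpr (((aux_sideE_class (hgood j).2).2).trans hrank0))
    exact and_congr hs1 hs2
  · -- Π case
    intro H1 H2 φ hφ hrank
    have hφ0 : TPi.{0} τ ℵ₀ ((n : ℕ) : Ordinal.{0}) φ := aux_tpi_change hφ
    have hrank0 : rank.{0} φ ≤ (m : Cardinal.{0}) := (aux_rank_le_nat φ m).mp hrank
    obtain ⟨J, hJ, k₁, k₂, M₁, M₂, hgood, hsem⟩ := aux_mainP Ξ hφ0 0 0 Fin.elim0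
    have key : ∀ (B₁ B₂ : Struc τ), Sat (sumLike Ξ B₁ B₂) φ emptyA ↔
        ∀ j, SemA B₁ (k₁ j) (M₁ j) emptyA ∨ SemA B₂ (k₂ j) (M₂ j) emptyA := by
      intro B₁ B₂
      have hguard : Guarded Ξ B₁ B₂ Fin.elim0 emptyA emptyA := fun i => i.elim0
      have h2 := hsem B₁ B₂ emptyA emptyA hguard
      rw [show (fun i : Fin 0 => (⟨Sum.map emptyA emptyA (Fin.elim0 i), hguard i⟩ :
        (Ξ.app (adu B₁ B₂)).carrier)) = emptyA from funext fun i => i.elim0] at h2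
      exact h2
    rw [key A₁ A₂, key A₁' A₂']
    refine forall_congr' fun j => ?_
    have hs1 : SemA A₁ (k₁ j) (M₁ j) emptyA ↔ SemA A₁' (k₁ j) (M₁ j) emptyA := by
      rw [← aux_sat_sideA, ← aux_sat_sideA]
      exact H1 (sideA (k₁ j) (M₁ j)) (aux_tpi_change (aux_sideA_class (hgood j).1).1)
        ((aux_rank_le_nat _ m).mpr (((aux_sideA_class (hgood j).1).2).trans hrank0))
    have hs2 : SemA A₂ (k₂ j) (M₂ j) emptyA ↔ SemA A₂' (k₂ j) (M₂ j) emptyA := by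
      rw [← aux_sat_sideA, ← aux_sat_sideA]
      exact H2 (sideA (k₂ j) (M₂ j)) (aux_tpi_change (aux_sideA_class (hgood j).2).1)
        ((aux_rank_le_nat _ m).mpr (((aux_sideA_class (hgood j).2).2).trans hrank0))
    exact or_congr hs1 hs2

end FV
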